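/- arXiv:1910.14384 — 2 statements merged into one kernel-verified Lean document; each statement's English description precedes it below -/
import Mathlib

section
/- Completeness for sets of pomsets with boxes: for terms e, f (with 0, +), the interpretations ⟦e⟧ and ⟦f⟧ are equal up to isomorphism (each poset in one is isomorphic to one in the other) if and only if e = f is derivable in the bisemiring-with-boxes theory. -/
/-- A poset with boxes over an alphabet `A`. -/
structure PB (A : Type) : Type 1 where
  Ev : Type
  le : Ev → Ev → Prop
  le_refl : ∀ e, le e e
  le_trans : ∀ e f g, le e f → le f g → le e g
  le_antisymm : ∀ e f, le e f → le f e → e = f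
  lab : Ev → A
  boxes : Set (Set Ev)
  boxes_ne : ∀ B ∈ boxes, B.Nonempty

/-- A homomorphism of posets with boxes: a bijection preserving labels,
order and boxes. -/
structure Hom {A : Type} (P Q : PB A) where
  toFun : P.Ev → Q.Ev
  bij : Function.Bijective toFun
  lab_eq : ∀ e, Q.lab (toFun e) = P.lab e
  mono : ∀ e f, P.le e f → Q.le (toFun e) (toFun f)
  box_pres : ∀ B ∈ P.boxes, toFun '' B ∈ Q.boxes

/-- Order-reflecting homomorphism. -/
def Hom.OrdRefl {A : Type} {P Q : PB A} (φ : Hom P Q) : Prop :=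
  ∀ e f, Q.le (φ.toFun e) (φ.toFun f) → P.le e f

/-- Box-reflecting homomorphism. -/
def Hom.BoxRefl {A : Type} {P Q : PB A} (φ : Hom P Q) : Prop :=
  ∀ B : Set P.Ev, φ.toFun '' B ∈ Q.boxes → B ∈ P.boxes

/-- Isomorphism of posets with boxes. -/
def Iso {A : Type} (P Q : PB A) : Prop :=
  ∃ φ : Hom P Q, φ.OrdRefl ∧ φ.BoxRefl

/-- `Subsume P Q` means `P ⊑ Q` : there is a homomorphism from `Q` to `P`. -/
def Subsume {A : Type} (P Q : PB A) : Prop := Nonempty (Hom Q P)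

/-- The empty poset with boxes. -/
def onePB (A : Type) : PB A where
  Ev := PEmpty
  le := fun _ _ => True
  le_refl := fun e => trivial
  le_trans := fun _ _ _ _ _ => trivial
  le_antisymm := fun e => e.elim
  lab := fun e => e.elim
  boxes := ∅
  boxes_ne := fun _ h => absurd h (Set.notMem_empty _)

/-- The atomic poset with boxes, with a single event labelled `a`. -/
def atomPB {A : Type} (a : A) : PB A where
  Ev := PUnit
  le := fun _ _ => True
  le_refl := fun _ => trivial
  le_trans := fun _ _ _ _ _ => trivial
  le_antisymm := fun _ _ _ _ => rfl
  lab := fun _ => a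
  boxes := ∅
  boxes_ne := fun _ h => absurd h (Set.notMem_empty _)

/-- The order of a sequential composition on the disjoint union of events. -/
def seqLE {A : Type} (P Q : PB A) : P.Ev ⊕ Q.Ev → P.Ev ⊕ Q.Ev → Prop
  | .inl a, .inl b => P.le a b
  | .inr a, .inr b => Q.le a b
  | .inl _, .inr _ => True
  | .inr _, .inl _ => False

/-- Sequential composition of posets with boxes. -/
def seqPB {A : Type} (P Q : PB A) : PB A where
  Ev := P.Ev ⊕ Q.Ev
  le := seqLE P Q
  le_refl := fun e => by cases e <;> simp [seqLE, PB.le_refl]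
  le_trans := fun e f g hef hfg => by
    cases e <;> cases f <;> cases g <;>
      simp_all [seqLE] <;>
      first
        | exact P.le_trans _ _ _ hef hfg
        | exact Q.le_trans _ _ _ hef hfg
  le_antisymm := fun e f hef hfe => by
    cases e <;> cases f <;> simp_all [seqLE]
    · exact P.le_antisymm _ _ hef hfe
    · exact Q.le_antisymm _ _ hef hfe
  lab := Sum.elim P.lab Q.lab
  boxes := (Set.image Sum.inl '' P.boxes) ∪ (Set.image Sum.inr '' Q.boxes)
  boxes_ne := by
    rintro B (⟨C, hC, rfl⟩ | ⟨C, hC, rfl⟩)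
    · exact ((P.boxes_ne C hC).image _)
    · exact ((Q.boxes_ne C hC).image _)

/-- The order of a parallel composition on the disjoint union of events. -/
def parLE {A : Type} (P Q : PB A) : P.Ev ⊕ Q.Ev → P.Ev ⊕ Q.Ev → Prop
  | .inl a, .inl b => P.le a b
  | .inr a, .inr b => Q.le a b
  | .inl _, .inr _ => False
  | .inr _, .inl _ => False

/-- Parallel composition of posets with boxes. -/
def parPB {A : Type} (P Q : PB A) : PB A where
  Ev := P.Ev ⊕ Q.Ev
  le := parLE P Q
  le_refl := fun e => by cases e <;> simp [parLE, PB.le_refl]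
  le_trans := fun e f g hef hfg => by
    cases e <;> cases f <;> cases g <;>
      simp_all [parLE] <;>
      first
        | exact P.le_trans _ _ _ hef hfg
        | exact Q.le_trans _ _ _ hef hfg
  le_antisymm := fun e f hef hfe => by
    cases e <;> cases f <;> simp_all [parLE]
    · exact P.le_antisymm _ _ hef hfe
    · exact Q.le_antisymm _ _ hef hfe
  lab := Sum.elim P.lab Q.lab
  boxes := (Set.image Sum.inl '' P.boxes) ∪ (Set.image Sum.inr '' Q.boxes)
  boxes_ne := by
    rintro B (⟨C, hC, rfl⟩ | ⟨C, hC, rfl⟩)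
    · exact ((P.boxes_ne C hC).image _)
    · exact ((Q.boxes_ne C hC).image _)

/-- Boxing: add the full (nonempty) set of events as a box. -/
def boxPB {A : Type} (P : PB A) : PB A where
  Ev := P.Ev
  le := P.le
  le_refl := P.le_refl
  le_trans := P.le_trans
  le_antisymm := P.le_antisymm
  lab := P.lab
  boxes := P.boxes ∪ {B | B = Set.univ ∧ B.Nonempty}
  boxes_ne := by
    rintro B (hB | ⟨rfl, hne⟩)
    · exact P.boxes_ne B hB
    · exact hne

/-- Restriction of a poset with boxes to a subset of its events. -/
def restrictPB {A : Type} (P : PB A) (S : Set P.Ev) : PB A where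
  Ev := S
  le := fun x y => P.le x.1 y.1
  le_refl := fun x => P.le_refl x.1
  le_trans := fun x y z => P.le_trans x.1 y.1 z.1
  le_antisymm := fun x y h h' => Subtype.ext (P.le_antisymm _ _ h h')
  lab := fun x => P.lab x.1
  boxes := {B | Subtype.val '' B ∈ P.boxes}
  boxes_ne := fun B hB => by
    rcases P.boxes_ne _ hB with ⟨x, ⟨y, hy, rfl⟩⟩
    exact ⟨y, hy⟩

/-- Forbidden pattern P1 (the `N` pattern). -/
def hasP1 {A : Type} (P : PB A) : Prop :=
  ∃ e1 e2 e3 e4 : P.Ev,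
    P.le e1 e3 ∧ P.le e2 e3 ∧ P.le e2 e4 ∧
    ¬ P.le e1 e4 ∧ ¬ P.le e2 e1 ∧ ¬ P.le e4 e3

/-- Forbidden pattern P2 (overlapping non-nested boxes). -/
def hasP2 {A : Type} (P : PB A) : Prop :=
  ∃ (Bx Cx : Set P.Ev) (e1 e2 e3 : P.Ev),
    Bx ∈ P.boxes ∧ Cx ∈ P.boxes ∧
    e1 ∈ Bx \ Cx ∧ e2 ∈ Bx ∩ Cx ∧ e3 ∈ Cx \ Bx

/-- Forbidden pattern P3. -/
def hasP3 {A : Type} (P : PB A) : Prop :=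
  ∃ (Bx : Set P.Ev) (e1 e2 e3 : P.Ev),
    Bx ∈ P.boxes ∧ e1 ∉ Bx ∧ e2 ∈ Bx ∧ e3 ∈ Bx ∧
    P.le e1 e2 ∧ ¬ P.le e1 e3

/-- Forbidden pattern P4. -/
def hasP4 {A : Type} (P : PB A) : Prop :=
  ∃ (Bx : Set P.Ev) (e1 e2 e3 : P.Ev),
    Bx ∈ P.boxes ∧ e1 ∉ Bx ∧ e2 ∈ Bx ∧ e3 ∈ Bx ∧
    P.le e2 e1 ∧ ¬ P.le e3 e1

/-- A set of events is non-trivial if it is neither empty nor everything. -/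
def NonTrivial {A : Type} (P : PB A) (S : Set P.Ev) : Prop :=
  S ≠ ∅ ∧ S ≠ Set.univ

/-- A set of events is nested if every box is contained in it or disjoint from it. -/
def Nested {A : Type} (P : PB A) (S : Set P.Ev) : Prop :=
  ∀ B ∈ P.boxes, B ⊆ S ∨ B ∩ S = ∅

/-- A set of events is prefix if every event in it is below every event outside. -/
def IsPrefix {A : Type} (P : PB A) (S : Set P.Ev) : Prop :=
  ∀ e ∈ S, ∀ f ∉ S, P.le e f

/-- A set of events is isolated if its events are incomparable with outside events. -/
def Isolated {A : Type} (P : PB A) (S : Set P.Ev) : Prop :=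
  ∀ e ∈ S, ∀ f ∉ S, ¬ P.le e f ∧ ¬ P.le f e
/-- Series–parallel terms. -/
inductive Term (A : Type) : Type
  | one : Term A
  | atom (a : A) : Term A
  | seq (s t : Term A) : Term A
  | par (s t : Term A) : Term A
  | box (s : Term A) : Term A

/-- Interpretation of terms as posets with boxes. -/
def semT {A : Type} : Term A → PB A
  | .one => onePB A
  | .atom a => atomPB a
  | .seq s t => seqPB (semT s) (semT t)
  | .par s t => parPB (semT s) (semT t)
  | .box s => boxPB (semT s)

/-- Derivability in the equational theory of bimonoids with boxes. -/
inductive BimEq {A : Type} : Term A → Term A → Prop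
  | seq_assoc (s t u : Term A) : BimEq (.seq s (.seq t u)) (.seq (.seq s t) u)
  | par_assoc (s t u : Term A) : BimEq (.par s (.par t u)) (.par (.par s t) u)
  | par_comm (s t : Term A) : BimEq (.par s t) (.par t s)
  | seq_unit_l (s : Term A) : BimEq (.seq .one s) s
  | seq_unit_r (s : Term A) : BimEq (.seq s .one) s
  | par_unit (s : Term A) : BimEq (.par .one s) s
  | box_box (s : Term A) : BimEq (.box (.box s)) (.box s)
  | box_one : BimEq (.box .one) .one
  | refl (s : Term A) : BimEq s s
  | symm {s t : Term A} : BimEq s t → BimEq t s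
  | trans {s t u : Term A} : BimEq s t → BimEq t u → BimEq s u
  | seq_congr {s s' t t' : Term A} : BimEq s s' → BimEq t t' → BimEq (.seq s t) (.seq s' t')
  | par_congr {s s' t t' : Term A} : BimEq s s' → BimEq t t' → BimEq (.par s t) (.par s' t')
  | box_congr {s s' : Term A} : BimEq s s' → BimEq (.box s) (.box s')

/-- Derivability in the inequational theory of concurrent monoids with boxes:
bimonoid axioms (in both directions) together with exchange and box elimination. -/
inductive CMLe {A : Type} : Term A → Term A → Prop
  | of_eq {s t : Term A} : BimEq s t → CMLe s t
  | exchange (s t u v : Term A) :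
      CMLe (.seq (.par s t) (.par u v)) (.par (.seq s u) (.seq t v))
  | box_le (s : Term A) : CMLe (.box s) s
  | refl (s : Term A) : CMLe s s
  | trans {s t u : Term A} : CMLe s t → CMLe t u → CMLe s u
  | seq_congr {s s' t t' : Term A} : CMLe s s' → CMLe t t' → CMLe (.seq s t) (.seq s' t')
  | par_congr {s s' t t' : Term A} : CMLe s s' → CMLe t t' → CMLe (.par s t) (.par s' t')
  | box_congr {s s' : Term A} : CMLe s s' → CMLe (.box s) (.box s')
/-- Terms with failure `0` and non-deterministic choice `+`. -/
inductive Term2 (A : Type) : Type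
  | zero : Term2 A
  | one : Term2 A
  | atom (a : A) : Term2 A
  | seq (e f : Term2 A) : Term2 A
  | par (e f : Term2 A) : Term2 A
  | plus (e f : Term2 A) : Term2 A
  | box (e : Term2 A) : Term2 A

/-- Embedding of series–parallel terms into the extended syntax. -/
def Term.toTerm2 {A : Type} : Term A → Term2 A
  | .one => .one
  | .atom a => .atom a
  | .seq s t => .seq s.toTerm2 t.toTerm2
  | .par s t => .par s.toTerm2 t.toTerm2
  | .box s => .box s.toTerm2

/-- Interpretation of extended terms as sets of posets with boxes. -/
def semT2 {A : Type} : Term2 A → Set (PB A)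
  | .zero => ∅
  | .one => {onePB A}
  | .atom a => {atomPB a}
  | .seq e f => Set.image2 seqPB (semT2 e) (semT2 f)
  | .par e f => Set.image2 parPB (semT2 e) (semT2 f)
  | .plus e f => semT2 e ∪ semT2 f
  | .box e => boxPB '' semT2 e

/-- Derivability in the equational theory of bisemirings with boxes. -/
inductive BSEq {A : Type} : Term2 A → Term2 A → Prop
  | seq_assoc (s t u : Term2 A) : BSEq (.seq s (.seq t u)) (.seq (.seq s t) u)
  | par_assoc (s t u : Term2 A) : BSEq (.par s (.par t u)) (.par (.par s t) u)
  | par_comm (s t : Term2 A) : BSEq (.par s t) (.par t s)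
  | seq_unit_l (s : Term2 A) : BSEq (.seq .one s) s
  | seq_unit_r (s : Term2 A) : BSEq (.seq s .one) s
  | par_unit (s : Term2 A) : BSEq (.par .one s) s
  | box_box (s : Term2 A) : BSEq (.box (.box s)) (.box s)
  | box_one : BSEq (.box .one) .one
  | plus_assoc (e f g : Term2 A) : BSEq (.plus e (.plus f g)) (.plus (.plus e f) g)
  | plus_comm (e f : Term2 A) : BSEq (.plus e f) (.plus f e)
  | plus_idem (e : Term2 A) : BSEq (.plus e e) e
  | plus_unit (e : Term2 A) : BSEq (.plus .zero e) e
  | seq_zero_l (e : Term2 A) : BSEq (.seq .zero e) .zero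
  | seq_zero_r (e : Term2 A) : BSEq (.seq e .zero) .zero
  | par_zero (e : Term2 A) : BSEq (.par .zero e) .zero
  | seq_distr_l (e f g : Term2 A) :
      BSEq (.seq e (.plus f g)) (.plus (.seq e f) (.seq e g))
  | seq_distr_r (e f g : Term2 A) :
      BSEq (.seq (.plus e f) g) (.plus (.seq e g) (.seq f g))
  | par_distr (e f g : Term2 A) :
      BSEq (.par e (.plus f g)) (.plus (.par e f) (.par e g))
  | box_zero : BSEq (A := A) (.box .zero) .zero
  | box_plus (e f : Term2 A) : BSEq (.box (.plus e f)) (.plus (.box e) (.box f))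
  | refl (e : Term2 A) : BSEq e e
  | symm {e f : Term2 A} : BSEq e f → BSEq f e
  | trans {e f g : Term2 A} : BSEq e f → BSEq f g → BSEq e g
  | seq_congr {e e' f f' : Term2 A} : BSEq e e' → BSEq f f' → BSEq (.seq e f) (.seq e' f')
  | par_congr {e e' f f' : Term2 A} : BSEq e e' → BSEq f f' → BSEq (.par e f) (.par e' f')
  | plus_congr {e e' f f' : Term2 A} : BSEq e e' → BSEq f f' → BSEq (.plus e f) (.plus e' f')
  | box_congr {e e' : Term2 A} : BSEq e e' → BSEq (.box e) (.box e')


set_option maxHeartbeats 1000000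

noncomputable section



variable {A : Type}

/-- Packaged isomorphism. -/
structure PreIso (P Q : PB A) where
  e : P.Ev ≃ Q.Ev
  le_iff : ∀ x y, P.le x y ↔ Q.le (e x) (e y)
  lab_eq : ∀ x, Q.lab (e x) = P.lab x
  box_iff : ∀ B : Set P.Ev, B ∈ P.boxes ↔ e '' B ∈ Q.boxes

def PIso (P Q : PB A) : Prop := Nonempty (PreIso P Q)

def PreIso.refl (P : PB A) : PreIso P P where
  e := Equiv.refl _
  le_iff := fun _ _ => Iff.rfl
  lab_eq := fun _ => rfl
  box_iff := fun B => by simp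

def PreIso.symm {P Q : PB A} (φ : PreIso P Q) : PreIso Q P where
  e := φ.e.symm
  le_iff := fun x y => by
    rw [φ.le_iff]; simp
  lab_eq := fun x => by
    have := φ.lab_eq (φ.e.symm x); simpa using this.symm
  box_iff := fun B => by
    rw [φ.box_iff]; rw [Equiv.image_symm_image]

def PreIso.trans {P Q R : PB A} (φ : PreIso P Q) (ψ : PreIso Q R) : PreIso P R where
  e := φ.e.trans ψ.e
  le_iff := fun x y => by rw [φ.le_iff, ψ.le_iff]; rfl
  lab_eq := fun x => by simp [Equiv.trans, ψ.lab_eq, φ.lab_eq]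
  box_iff := fun B => by
    rw [φ.box_iff, ψ.box_iff, Set.image_image]; rfl

theorem piso_refl (P : PB A) : PIso P P := ⟨PreIso.refl P⟩
theorem PIso.symm {P Q : PB A} : PIso P Q → PIso Q P := fun ⟨φ⟩ => ⟨φ.symm⟩
theorem PIso.trans {P Q R : PB A} : PIso P Q → PIso Q R → PIso P R :=
  fun ⟨φ⟩ ⟨ψ⟩ => ⟨φ.trans ψ⟩

theorem iso_iff_piso (P Q : PB A) : Iso P Q ↔ PIso P Q := by
  constructor
  · rintro ⟨φ, h1, h2⟩
    refine ⟨⟨Equiv.ofBijective φ.toFun φ.bij, ?_, ?_, ?_⟩⟩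
    · exact fun x y => ⟨φ.mono x y, h1 x y⟩
    · exact fun x => φ.lab_eq x
    · exact fun B => ⟨φ.box_pres B, h2 B⟩
  · rintro ⟨φ⟩
    refine ⟨⟨φ.e, φ.e.bijective, φ.lab_eq, fun x y => (φ.le_iff x y).1,
      fun B hB => (φ.box_iff B).1 hB⟩, ?_, ?_⟩
    · exact fun x y h => (φ.le_iff x y).2 h
    · exact fun B hB => (φ.box_iff B).2 hB



variable {A : Type}

open Sum Set

theorem boxes_empty_of_isEmpty (P : PB A) (h : IsEmpty P.Ev) : P.boxes = ∅ := by
  ext B; simp only [mem_empty_iff_false, iff_false]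
  intro hB
  rcases P.boxes_ne B hB with ⟨x, _⟩
  exact h.false x

theorem mem_sumBoxes {α β : Type} {X : Set (Set α)} {Y : Set (Set β)}
    {B : Set (α ⊕ β)} :
    B ∈ (Set.image Sum.inl '' X ∪ Set.image Sum.inr '' Y) ↔
      (∃ C ∈ X, B = Sum.inl '' C) ∨ (∃ C ∈ Y, B = Sum.inr '' C) := by
  simp [eq_comm]


theorem eqv_image_eq {α β : Type} (e : α ≃ β) {B : Set α} {t : Set β}
    (h : e '' B = t) : B = e.symm '' t := by
  rw [← h, Equiv.symm_image_image]

theorem seqPB_boxes (P Q : PB A) :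
    (seqPB P Q).boxes = (Set.image Sum.inl '' P.boxes ∪ Set.image Sum.inr '' Q.boxes) := rfl

theorem parPB_boxes (P Q : PB A) :
    (parPB P Q).boxes = (Set.image Sum.inl '' P.boxes ∪ Set.image Sum.inr '' Q.boxes) := rfl

theorem sumCongr_boxes_iff {α β α' β' : Type} (e₁ : α ≃ α') (e₂ : β ≃ β')
    {X : Set (Set α)} {Y : Set (Set β)} {X' : Set (Set α')} {Y' : Set (Set β')}
    (h₁ : ∀ B, B ∈ X ↔ e₁ '' B ∈ X') (h₂ : ∀ B, B ∈ Y ↔ e₂ '' B ∈ Y')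
    (B : Set (α ⊕ β)) :
    B ∈ (Set.image Sum.inl '' X ∪ Set.image Sum.inr '' Y) ↔
      (Equiv.sumCongr e₁ e₂) '' B ∈ (Set.image Sum.inl '' X' ∪ Set.image Sum.inr '' Y') := by
  rw [mem_sumBoxes, mem_sumBoxes]
  constructor
  · rintro (⟨C, hC, rfl⟩ | ⟨C, hC, rfl⟩)
    · left; exact ⟨e₁ '' C, (h₁ C).1 hC, by simp [Set.image_image]⟩
    · right; exact ⟨e₂ '' C, (h₂ C).1 hC, by simp [Set.image_image]⟩
  · rintro (⟨C, hC, hB⟩ | ⟨C, hC, hB⟩)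
    · have : B = Sum.inl '' (e₁.symm '' C) := by
        have := congrArg (Set.image (Equiv.sumCongr e₁ e₂).symm) hB
        rw [Equiv.symm_image_image] at this
        rw [this]; simp [Set.image_image]
      subst this
      left
      refine ⟨e₁.symm '' C, ?_, rfl⟩
      rw [h₁, Equiv.image_symm_image]; exact hC
    · have : B = Sum.inr '' (e₂.symm '' C) := by
        have := congrArg (Set.image (Equiv.sumCongr e₁ e₂).symm) hB
        rw [Equiv.symm_image_image] at this
        rw [this]; simp [Set.image_image]
      subst this
      right
      refine ⟨e₂.symm '' C, ?_, rfl⟩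
      rw [h₂, Equiv.image_symm_image]; exact hC

def seqCongrIso {P P' Q Q' : PB A} (φ : PreIso P P') (ψ : PreIso Q Q') :
    PreIso (seqPB P Q) (seqPB P' Q') where
  e := Equiv.sumCongr φ.e ψ.e
  le_iff := fun x y => by
    cases x <;> cases y <;> erw [Equiv.sumCongr_apply, Equiv.sumCongr_apply] <;> simp [seqPB, seqLE, φ.le_iff, ψ.le_iff]
  lab_eq := fun x => by cases x <;> erw [Equiv.sumCongr_apply] <;> simp [seqPB, φ.lab_eq, ψ.lab_eq]
  box_iff := fun B => sumCongr_boxes_iff φ.e ψ.e (fun B => φ.box_iff B) (fun B => ψ.box_iff B) B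

def parCongrIso {P P' Q Q' : PB A} (φ : PreIso P P') (ψ : PreIso Q Q') :
    PreIso (parPB P Q) (parPB P' Q') where
  e := Equiv.sumCongr φ.e ψ.e
  le_iff := fun x y => by
    cases x <;> cases y <;> erw [Equiv.sumCongr_apply, Equiv.sumCongr_apply] <;> simp [parPB, parLE, φ.le_iff, ψ.le_iff]
  lab_eq := fun x => by cases x <;> erw [Equiv.sumCongr_apply] <;> simp [parPB, φ.lab_eq, ψ.lab_eq]
  box_iff := fun B => sumCongr_boxes_iff φ.e ψ.e (fun B => φ.box_iff B) (fun B => ψ.box_iff B) B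

theorem sumAssoc_boxes_iff {α β γ : Type}
    {X : Set (Set α)} {Y : Set (Set β)} {Z : Set (Set γ)} (B : Set (α ⊕ (β ⊕ γ))) :
    B ∈ (Set.image Sum.inl '' X ∪
          Set.image Sum.inr '' (Set.image Sum.inl '' Y ∪ Set.image Sum.inr '' Z)) ↔
      (Equiv.sumAssoc α β γ).symm '' B ∈
        (Set.image Sum.inl '' (Set.image Sum.inl '' X ∪ Set.image Sum.inr '' Y) ∪
          Set.image Sum.inr '' Z) := by
  simp only [mem_sumBoxes]
  constructor
  · rintro (⟨C, hC, rfl⟩ | ⟨D, (⟨C, hC, rfl⟩ | ⟨C, hC, rfl⟩), rfl⟩)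
    · left; exact ⟨Sum.inl '' C, Or.inl ⟨C, hC, rfl⟩, by simp [Set.image_image, Equiv.sumAssoc]⟩
    · left; exact ⟨Sum.inr '' C, Or.inr ⟨C, hC, rfl⟩, by simp [Set.image_image, Equiv.sumAssoc]⟩
    · right; exact ⟨C, hC, by simp [Set.image_image, Equiv.sumAssoc]⟩
  · rintro (⟨D, (⟨C, hC, rfl⟩ | ⟨C, hC, rfl⟩), hB⟩ | ⟨C, hC, hB⟩)
    · have : B = Sum.inl '' C := by
        have := congrArg (Set.image (Equiv.sumAssoc α β γ)) hB
        rw [Equiv.image_symm_image] at this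
        rw [this]; simp [Set.image_image, Equiv.sumAssoc]
      exact Or.inl ⟨C, hC, this⟩
    · have : B = Sum.inr '' (Sum.inl '' C) := by
        have := congrArg (Set.image (Equiv.sumAssoc α β γ)) hB
        rw [Equiv.image_symm_image] at this
        rw [this]; simp [Set.image_image, Equiv.sumAssoc]
      exact Or.inr ⟨Sum.inl '' C, Or.inl ⟨C, hC, rfl⟩, this⟩
    · have : B = Sum.inr '' (Sum.inr '' C) := by
        have := congrArg (Set.image (Equiv.sumAssoc α β γ)) hB
        rw [Equiv.image_symm_image] at this
        rw [this]; simp [Set.image_image, Equiv.sumAssoc]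
      exact Or.inr ⟨Sum.inr '' C, Or.inr ⟨C, hC, rfl⟩, this⟩

def seqAssocIso (P Q R : PB A) : PreIso (seqPB P (seqPB Q R)) (seqPB (seqPB P Q) R) where
  e := (Equiv.sumAssoc P.Ev Q.Ev R.Ev).symm
  le_iff := fun x y => by
    rcases x with x | x | x <;> rcases y with y | y | y <;>
      exact Iff.rfl
  lab_eq := fun x => by
    rcases x with x | x | x <;> rfl
  box_iff := fun B => sumAssoc_boxes_iff B

def parAssocIso (P Q R : PB A) : PreIso (parPB P (parPB Q R)) (parPB (parPB P Q) R) where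
  e := (Equiv.sumAssoc P.Ev Q.Ev R.Ev).symm
  le_iff := fun x y => by
    rcases x with x | x | x <;> rcases y with y | y | y <;>
      exact Iff.rfl
  lab_eq := fun x => by
    rcases x with x | x | x <;> rfl
  box_iff := fun B => sumAssoc_boxes_iff B


theorem sumComm_boxes_iff {α β : Type} {X : Set (Set α)} {Y : Set (Set β)}
    (B : Set (α ⊕ β)) :
    B ∈ (Set.image Sum.inl '' X ∪ Set.image Sum.inr '' Y) ↔
      (Equiv.sumComm α β) '' B ∈ (Set.image Sum.inl '' Y ∪ Set.image Sum.inr '' X) := by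
  simp only [mem_sumBoxes]
  constructor
  · rintro (⟨C, hC, rfl⟩ | ⟨C, hC, rfl⟩)
    · right; exact ⟨C, hC, by simp [Set.image_image]⟩
    · left; exact ⟨C, hC, by simp [Set.image_image]⟩
  · rintro (⟨C, hC, hB⟩ | ⟨C, hC, hB⟩)
    · have := eqv_image_eq _ hB
      rw [this]; right; exact ⟨C, hC, by simp [Set.image_image]⟩
    · have := eqv_image_eq _ hB
      rw [this]; left; exact ⟨C, hC, by simp [Set.image_image]⟩

def parCommIso (P Q : PB A) : PreIso (parPB P Q) (parPB Q P) where
  e := Equiv.sumComm P.Ev Q.Ev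
  le_iff := fun x y => by
    cases x <;> cases y <;> exact Iff.rfl
  lab_eq := fun x => by cases x <;> rfl
  box_iff := fun B => sumComm_boxes_iff B

theorem sumEmptyL_boxes_iff {α β : Type} (h : IsEmpty α)
    {Y : Set (Set β)} (B : Set (α ⊕ β)) :
    B ∈ (Set.image Sum.inl '' (∅ : Set (Set α)) ∪ Set.image Sum.inr '' Y) ↔
      (Equiv.emptySum α β) '' B ∈ Y := by
  simp only [mem_sumBoxes]
  constructor
  · rintro (⟨C, hC, rfl⟩ | ⟨C, hC, rfl⟩)
    · exact absurd hC (Set.notMem_empty _)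
    · have : (Equiv.emptySum α β) '' (Sum.inr '' C) = C := by
        ext x; simp [Set.image_image]
      rw [this]; exact hC
  · intro hB
    right
    refine ⟨(Equiv.emptySum α β) '' B, hB, ?_⟩
    ext x
    rcases x with x | x
    · exact (h.false x).elim
    · simp only [Set.mem_image]
      constructor
      · intro hx
        exact ⟨(Equiv.emptySum α β) (Sum.inr x), ⟨Sum.inr x, hx, rfl⟩, by simp⟩
      · rintro ⟨y, ⟨z, hz, rfl⟩, hxy⟩
        rcases z with z | z
        · exact ((h.false z)).elim
        · simp at hxy; subst hxy; exact hz

/-- A PB with no events and hence no boxes behaves as a unit. -/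
def seqUnitLIso (Z P : PB A) (h : IsEmpty Z.Ev) : PreIso (seqPB Z P) P where
  e := Equiv.emptySum Z.Ev P.Ev
  le_iff := fun x y => by
    cases x with
    | inl x => exact (h.false x).elim
    | inr x =>
      cases y with
      | inl y => exact (h.false y).elim
      | inr y => exact Iff.rfl
  lab_eq := fun x => by
    cases x with
    | inl x => exact (h.false x).elim
    | inr x => rfl
  box_iff := fun B => by
    have hz : Z.boxes = ∅ := boxes_empty_of_isEmpty Z h
    have := sumEmptyL_boxes_iff (β := P.Ev) h (Y := P.boxes) B
    rw [seqPB_boxes, hz]; exact this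

def parUnitLIso (Z P : PB A) (h : IsEmpty Z.Ev) : PreIso (parPB Z P) P where
  e := Equiv.emptySum Z.Ev P.Ev
  le_iff := fun x y => by
    cases x with
    | inl x => exact (h.false x).elim
    | inr x =>
      cases y with
      | inl y => exact (h.false y).elim
      | inr y => exact Iff.rfl
  lab_eq := fun x => by
    cases x with
    | inl x => exact (h.false x).elim
    | inr x => rfl
  box_iff := fun B => by
    have hz : Z.boxes = ∅ := boxes_empty_of_isEmpty Z h
    have := sumEmptyL_boxes_iff (β := P.Ev) h (Y := P.boxes) B
    rw [parPB_boxes, hz]; exact this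

theorem sumEmptyR_boxes_iff {α β : Type} (h : IsEmpty β)
    {X : Set (Set α)} (B : Set (α ⊕ β)) :
    B ∈ (Set.image Sum.inl '' X ∪ Set.image Sum.inr '' (∅ : Set (Set β))) ↔
      (Equiv.sumEmpty α β) '' B ∈ X := by
  simp only [mem_sumBoxes]
  constructor
  · rintro (⟨C, hC, rfl⟩ | ⟨C, hC, rfl⟩)
    · have : (Equiv.sumEmpty α β) '' (Sum.inl '' C) = C := by
        ext x
        simp only [Set.image_image, Set.mem_image]
        constructor
        · rintro ⟨y, hy, rfl⟩; simpa using hy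
        · intro hx; exact ⟨x, hx, by simp⟩
      rw [this]; exact hC
    · exact absurd hC (Set.notMem_empty _)
  · intro hB
    left
    refine ⟨(Equiv.sumEmpty α β) '' B, hB, ?_⟩
    ext x
    rcases x with x | x
    · simp only [Set.mem_image]
      constructor
      · intro hx
        exact ⟨(Equiv.sumEmpty α β) (Sum.inl x), ⟨Sum.inl x, hx, rfl⟩, by simp⟩
      · rintro ⟨y, ⟨z, hz, rfl⟩, hxy⟩
        rcases z with z | z
        · simp at hxy; subst hxy; exact hz
        · exact ((h.false z)).elim
    · exact ((h.false x)).elim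

def seqUnitRIso (P Z : PB A) (h : IsEmpty Z.Ev) : PreIso (seqPB P Z) P where
  e := Equiv.sumEmpty P.Ev Z.Ev
  le_iff := fun x y => by
    cases x with
    | inr x => exact (h.false x).elim
    | inl x =>
      cases y with
      | inr y => exact (h.false y).elim
      | inl y => exact Iff.rfl
  lab_eq := fun x => by
    cases x with
    | inr x => exact (h.false x).elim
    | inl x => rfl
  box_iff := fun B => by
    have hz : Z.boxes = ∅ := boxes_empty_of_isEmpty Z h
    rw [seqPB_boxes, hz]
    exact sumEmptyR_boxes_iff h B

theorem boxPB_boxes (P : PB A) :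
    (boxPB P).boxes = P.boxes ∪ {B | B = Set.univ ∧ B.Nonempty} := rfl

def boxCongrIso {P Q : PB A} (φ : PreIso P Q) : PreIso (boxPB P) (boxPB Q) where
  e := φ.e
  le_iff := φ.le_iff
  lab_eq := φ.lab_eq
  box_iff := fun B => by
    rw [boxPB_boxes, boxPB_boxes]
    change B ∈ P.boxes ∨ (B = Set.univ ∧ B.Nonempty) ↔
      φ.e '' B ∈ Q.boxes ∨ (φ.e '' B = Set.univ ∧ (φ.e '' B).Nonempty)
    constructor
    · rintro (hB | ⟨rfl, hne⟩)
      · exact Or.inl ((φ.box_iff B).1 hB)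
      · right
        constructor
        · erw [Set.image_univ, Equiv.range_eq_univ]
        · exact hne.image _
    · rintro (hB | ⟨hU, hne⟩)
      · exact Or.inl ((φ.box_iff B).2 hB)
      · right
        have hBu : B = Set.univ := by
          have h2 := eqv_image_eq φ.e hU
          erw [h2, Set.image_univ, Equiv.range_eq_univ]; rfl
        exact ⟨hBu, hne.of_image⟩

def boxBoxIso (P : PB A) : PreIso (boxPB (boxPB P)) (boxPB P) where
  e := Equiv.refl P.Ev
  le_iff := fun _ _ => Iff.rfl
  lab_eq := fun _ => rfl
  box_iff := fun B => by
    show B ∈ (boxPB (boxPB P)).boxes ↔ (Equiv.refl P.Ev) '' B ∈ (boxPB P).boxes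
    simp only [Equiv.coe_refl, Set.image_id]
    change (B : Set P.Ev) ∈ P.boxes ∪ {C : Set P.Ev | C = Set.univ ∧ C.Nonempty} ∪ {C : Set P.Ev | C = Set.univ ∧ C.Nonempty} ↔ id '' (B : Set P.Ev) ∈ P.boxes ∪ {C : Set P.Ev | C = Set.univ ∧ C.Nonempty}
    simp only [Set.mem_union, Set.mem_setOf_eq, Set.image_id]
    change ((B : Set P.Ev) ∈ P.boxes ∨ ((B : Set P.Ev) = Set.univ ∧ (B : Set P.Ev).Nonempty)) ∨ ((B : Set P.Ev) = Set.univ ∧ (B : Set P.Ev).Nonempty) ↔ (B : Set P.Ev) ∈ P.boxes ∨ ((B : Set P.Ev) = Set.univ ∧ (B : Set P.Ev).Nonempty)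
    tauto

def boxEmptyIso (Z : PB A) (h : IsEmpty Z.Ev) : PreIso (boxPB Z) Z where
  e := Equiv.refl Z.Ev
  le_iff := fun _ _ => Iff.rfl
  lab_eq := fun _ => rfl
  box_iff := fun B => by
    show B ∈ (boxPB Z).boxes ↔ (Equiv.refl Z.Ev) '' B ∈ Z.boxes
    simp only [Equiv.coe_refl, Set.image_id]
    change (B : Set Z.Ev) ∈ Z.boxes ∪ {C : Set Z.Ev | C = Set.univ ∧ C.Nonempty} ↔ id '' (B : Set Z.Ev) ∈ Z.boxes
    simp only [Set.mem_union, Set.mem_setOf_eq, Set.image_id]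
    constructor
    · rintro (hB | ⟨rfl, ⟨x, _⟩⟩)
      · exact hB
      · exact (h.false x).elim
    · exact Or.inl

theorem isEmpty_one : IsEmpty (semT (.one : Term A)).Ev := ⟨fun x => PEmpty.elim x⟩

theorem semT_one : semT (.one : Term A) = onePB A := rfl

theorem bimEq_sound {s t : Term A} (h : BimEq s t) : PIso (semT s) (semT t) := by
  induction h with
  | seq_assoc s t u => exact ⟨seqAssocIso _ _ _⟩
  | par_assoc s t u => exact ⟨parAssocIso _ _ _⟩
  | par_comm s t => exact ⟨parCommIso _ _⟩
  | seq_unit_l s => exact ⟨seqUnitLIso _ _ isEmpty_one⟩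
  | seq_unit_r s => exact ⟨seqUnitRIso _ _ isEmpty_one⟩
  | par_unit s => exact ⟨parUnitLIso _ _ isEmpty_one⟩
  | box_box s => exact ⟨boxBoxIso _⟩
  | box_one => exact ⟨boxEmptyIso _ isEmpty_one⟩
  | refl s => exact piso_refl _
  | symm _ ih => exact ih.symm
  | trans _ _ ih₁ ih₂ => exact ih₁.trans ih₂
  | seq_congr _ _ ih₁ ih₂ =>
      exact ⟨seqCongrIso ih₁.some ih₂.some⟩
  | par_congr _ _ ih₁ ih₂ =>
      exact ⟨parCongrIso ih₁.some ih₂.some⟩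
  | box_congr _ ih => exact ⟨boxCongrIso ih.some⟩



variable {A : Type}

theorem restrictPB_boxes (P : PB A) (S : Set P.Ev) :
    (restrictPB P S).boxes = {B | Subtype.val '' B ∈ P.boxes} := rfl

/-- Any two empty posets with boxes are isomorphic. -/
def emptyIso (P Q : PB A) (hP : IsEmpty P.Ev) (hQ : IsEmpty Q.Ev) : PreIso P Q where
  e := @Equiv.equivOfIsEmpty _ _ hP hQ
  le_iff := fun x _ => (hP.false x).elim
  lab_eq := fun x => (hP.false x).elim
  box_iff := fun B => by
    rw [boxes_empty_of_isEmpty P hP, boxes_empty_of_isEmpty Q hQ]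
    simp

theorem isEmpty_restrict_of_subset_empty {P : PB A} {S : Set P.Ev}
    (h : S = ∅) : IsEmpty (restrictPB P S).Ev := by
  subst h; exact ⟨fun x => (Set.notMem_empty _ x.2)⟩

def restrictUnivIso (P : PB A) : PreIso (restrictPB P Set.univ) P where
  e := Equiv.Set.univ P.Ev
  le_iff := fun x y => Iff.rfl
  lab_eq := fun x => rfl
  box_iff := fun B => by
    have h : (Equiv.Set.univ P.Ev) '' B = Subtype.val '' B := by
      ext x; simp [Equiv.Set.univ]
    exact (iff_of_eq (congrArg (fun s => s ∈ P.boxes) h)).symm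

def restrictCongrIso {P Q : PB A} (φ : PreIso P Q) (S : Set P.Ev) :
    PreIso (restrictPB P S) (restrictPB Q (φ.e '' S)) where
  e := φ.e.image S
  le_iff := fun x y => by
    show P.le x.1 y.1 ↔ Q.le (φ.e x.1) (φ.e y.1)
    exact φ.le_iff _ _
  lab_eq := fun x => by
    show Q.lab (φ.e x.1) = P.lab x.1
    exact φ.lab_eq _
  box_iff := fun B => by
    have h : Subtype.val '' ((φ.e.image S) '' B) = φ.e '' (Subtype.val '' B) := by
      ext x
      constructor
      · rintro ⟨w, ⟨u, hu, rfl⟩, rfl⟩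
        exact ⟨u.1, ⟨u, hu, rfl⟩, rfl⟩
      · rintro ⟨a, ⟨u, hu, rfl⟩, rfl⟩
        exact ⟨(φ.e.image S) u, ⟨u, hu, rfl⟩, rfl⟩
    show Subtype.val '' B ∈ P.boxes ↔ Subtype.val '' ((φ.e.image S) '' B) ∈ Q.boxes
    rw [φ.box_iff]
    exact (iff_of_eq (congrArg (fun s => s ∈ Q.boxes) h)).symm

def restrictEq (P : PB A) {S T : Set P.Ev} (h : S = T) :
    PreIso (restrictPB P S) (restrictPB P T) := h ▸ PreIso.refl _

/-- The canonical equivalence for restricting a sum to a split subset. -/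
def sumSubtypeEquiv {α β : Type} (S : Set α) (T : Set β) :
    (↥S ⊕ ↥T) ≃ ↥(Sum.inl '' S ∪ Sum.inr '' T) := by
  refine Equiv.ofBijective
    (Sum.elim (fun x => ⟨Sum.inl x.1, Or.inl ⟨x.1, x.2, rfl⟩⟩)
              (fun y => ⟨Sum.inr y.1, Or.inr ⟨y.1, y.2, rfl⟩⟩)) ⟨?_, ?_⟩
  · rintro (x | x) (y | y) h <;> simp only [Sum.elim_inl, Sum.elim_inr, Subtype.mk_eq_mk] at h
    · rcases h with h; exact congrArg Sum.inl (Subtype.ext (by injection h with h; injection h))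
    · exact absurd h (fun h' => Sum.inl_ne_inr (congrArg Subtype.val h'))
    · exact absurd h (fun h' => Sum.inr_ne_inl (congrArg Subtype.val h'))
    · rcases h with h; exact congrArg Sum.inr (Subtype.ext (by injection h with h; injection h))
  · rintro ⟨z, hz⟩
    rcases z with a | b
    · have ha : a ∈ S := by
        rcases hz with ⟨x, hx, hxa⟩ | ⟨x, hx, hxa⟩
        · cases hxa; exact hx
        · exact absurd hxa (by simp)
      exact ⟨Sum.inl ⟨a, ha⟩, rfl⟩
    · have hb : b ∈ T := by
        rcases hz with ⟨x, hx, hxa⟩ | ⟨x, hx, hxa⟩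
        · exact absurd hxa (by simp)
        · cases hxa; exact hx
      exact ⟨Sum.inr ⟨b, hb⟩, rfl⟩

theorem sumSubtypeEquiv_inl {α β : Type} (S : Set α) (T : Set β) (x : ↥S) :
    ((sumSubtypeEquiv S T) (Sum.inl x)).1 = Sum.inl x.1 := rfl

theorem sumSubtypeEquiv_inr {α β : Type} (S : Set α) (T : Set β) (y : ↥T) :
    ((sumSubtypeEquiv S T) (Sum.inr y)).1 = Sum.inr y.1 := rfl

theorem sumSubtypeEquiv_val_image {α β : Type} (S : Set α) (T : Set β)
    (B : Set (↥S ⊕ ↥T)) :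
    Subtype.val '' ((sumSubtypeEquiv S T) '' B) =
      Sum.inl '' (Subtype.val '' {x : ↥S | Sum.inl x ∈ B}) ∪
      Sum.inr '' (Subtype.val '' {y : ↥T | Sum.inr y ∈ B}) := by
  ext z
  simp only [Set.mem_image, Set.mem_union, Set.mem_setOf_eq]
  constructor
  · rintro ⟨w, ⟨u, hu, rfl⟩, rfl⟩
    rcases u with x | y
    · left; exact ⟨x.1, ⟨x, hu, rfl⟩, rfl⟩
    · right; exact ⟨y.1, ⟨y, hu, rfl⟩, rfl⟩
  · rintro (⟨a, ⟨x, hx, rfl⟩, rfl⟩ | ⟨b, ⟨y, hy, rfl⟩, rfl⟩)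
    · exact ⟨(sumSubtypeEquiv S T) (Sum.inl x), ⟨Sum.inl x, hx, rfl⟩, rfl⟩
    · exact ⟨(sumSubtypeEquiv S T) (Sum.inr y), ⟨Sum.inr y, hy, rfl⟩, rfl⟩

theorem sumSubtypeEquiv_val_image_inl {α β : Type} (S : Set α) (T : Set β)
    (C : Set ↥S) :
    Subtype.val '' ((sumSubtypeEquiv S T) '' (Sum.inl '' C)) = Sum.inl '' (Subtype.val '' C) := by
  ext z
  constructor
  · rintro ⟨w, ⟨u, ⟨x, hx, rfl⟩, rfl⟩, rfl⟩
    exact ⟨x.1, ⟨x, hx, rfl⟩, rfl⟩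
  · rintro ⟨a, ⟨x, hx, rfl⟩, rfl⟩
    exact ⟨(sumSubtypeEquiv S T) (Sum.inl x), ⟨Sum.inl x, ⟨x, hx, rfl⟩, rfl⟩, rfl⟩

theorem sumSubtypeEquiv_val_image_inr {α β : Type} (S : Set α) (T : Set β)
    (C : Set ↥T) :
    Subtype.val '' ((sumSubtypeEquiv S T) '' (Sum.inr '' C)) = Sum.inr '' (Subtype.val '' C) := by
  ext z
  constructor
  · rintro ⟨w, ⟨u, ⟨x, hx, rfl⟩, rfl⟩, rfl⟩
    exact ⟨x.1, ⟨x, hx, rfl⟩, rfl⟩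
  · rintro ⟨a, ⟨x, hx, rfl⟩, rfl⟩
    exact ⟨(sumSubtypeEquiv S T) (Sum.inr x), ⟨Sum.inr x, ⟨x, hx, rfl⟩, rfl⟩, rfl⟩

theorem sumSubtype_boxes_iff {α β : Type} (S : Set α) (T : Set β)
    {X : Set (Set α)} {Y : Set (Set β)} (B : Set (↥S ⊕ ↥T)) :
    B ∈ (Set.image Sum.inl '' {C : Set ↥S | Subtype.val '' C ∈ X} ∪
          Set.image Sum.inr '' {C : Set ↥T | Subtype.val '' C ∈ Y}) ↔
      Subtype.val '' ((sumSubtypeEquiv S T) '' B) ∈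
        (Set.image Sum.inl '' X ∪ Set.image Sum.inr '' Y) := by
  rw [mem_sumBoxes, mem_sumBoxes]
  constructor
  · rintro (⟨C, hC, rfl⟩ | ⟨C, hC, rfl⟩)
    · left; exact ⟨Subtype.val '' C, hC, sumSubtypeEquiv_val_image_inl S T C⟩
    · right; exact ⟨Subtype.val '' C, hC, sumSubtypeEquiv_val_image_inr S T C⟩
  · rintro (⟨D, hD, hB⟩ | ⟨D, hD, hB⟩)
    · -- all elements of B are `inl`
      have hB2 : ∀ y : ↥T, Sum.inr y ∉ B := by
        intro y hy
        have : (Sum.inr y.1 : α ⊕ β) ∈ Subtype.val '' ((sumSubtypeEquiv S T) '' B) :=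
          ⟨(sumSubtypeEquiv S T) (Sum.inr y), ⟨Sum.inr y, hy, rfl⟩, rfl⟩
        rw [hB] at this
        rcases this with ⟨a, _, h⟩
        exact absurd h (by simp)
      set C : Set ↥S := {x | Sum.inl x ∈ B} with hCdef
      have hBC : B = Sum.inl '' C := by
        ext u
        rcases u with x | y
        · simp [hCdef]
        · simp only [Set.mem_image]
          constructor
          · intro hy; exact absurd hy (hB2 y)
          · rintro ⟨x, _, h⟩; exact absurd h (by simp)
      have hval : Subtype.val '' C = D := by
        have := sumSubtypeEquiv_val_image_inl S T C
        rw [← hBC, hB] at this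
        exact (Set.image_eq_image Sum.inl_injective).1 this.symm
      left
      exact ⟨C, by rw [Set.mem_setOf_eq, hval]; exact hD, hBC⟩
    · have hB2 : ∀ x : ↥S, Sum.inl x ∉ B := by
        intro x hx
        have : (Sum.inl x.1 : α ⊕ β) ∈ Subtype.val '' ((sumSubtypeEquiv S T) '' B) :=
          ⟨(sumSubtypeEquiv S T) (Sum.inl x), ⟨Sum.inl x, hx, rfl⟩, rfl⟩
        rw [hB] at this
        rcases this with ⟨a, _, h⟩
        exact absurd h (by simp)
      set C : Set ↥T := {y | Sum.inr y ∈ B} with hCdef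
      have hBC : B = Sum.inr '' C := by
        ext u
        rcases u with x | y
        · simp only [Set.mem_image]
          constructor
          · intro hx; exact absurd hx (hB2 x)
          · rintro ⟨x', _, h⟩; exact absurd h (by simp)
        · simp [hCdef]
      have hval : Subtype.val '' C = D := by
        have := sumSubtypeEquiv_val_image_inr S T C
        rw [← hBC, hB] at this
        exact (Set.image_eq_image Sum.inr_injective).1 this.symm
      right
      exact ⟨C, by rw [Set.mem_setOf_eq, hval]; exact hD, hBC⟩

def restrictSeqIso (P Q : PB A) (S : Set P.Ev) (T : Set Q.Ev) :
    PreIso (seqPB (restrictPB P S) (restrictPB Q T))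
      (restrictPB (seqPB P Q) (Sum.inl '' S ∪ Sum.inr '' T)) where
  e := sumSubtypeEquiv S T
  le_iff := fun x y => by
    cases x <;> cases y <;> exact Iff.rfl
  lab_eq := fun x => by cases x <;> rfl
  box_iff := fun B => sumSubtype_boxes_iff S T B

def restrictParIso (P Q : PB A) (S : Set P.Ev) (T : Set Q.Ev) :
    PreIso (parPB (restrictPB P S) (restrictPB Q T))
      (restrictPB (parPB P Q) (Sum.inl '' S ∪ Sum.inr '' T)) where
  e := sumSubtypeEquiv S T
  le_iff := fun x y => by
    cases x <;> cases y <;> exact Iff.rfl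
  lab_eq := fun x => by cases x <;> rfl
  box_iff := fun B => sumSubtype_boxes_iff S T B



variable {A : Type}

/-! ### Transport of structure along isomorphisms -/

theorem PreIso.image_compl {P Q : PB A} (φ : PreIso P Q) (S : Set P.Ev) :
    φ.e '' Sᶜ = (φ.e '' S)ᶜ := by
  ext y
  constructor
  · rintro ⟨x, hx, rfl⟩ ⟨x', hx', h⟩
    exact hx (φ.e.injective h ▸ hx')
  · intro hy
    refine ⟨φ.e.symm y, fun hmem => hy ⟨φ.e.symm y, hmem, by simp⟩, by simp⟩

theorem PreIso.isPrefix_image {P Q : PB A} (φ : PreIso P Q) {S : Set P.Ev}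
    (h : IsPrefix P S) : IsPrefix Q (φ.e '' S) := by
  rintro y ⟨x, hx, rfl⟩ z hz
  have hz' : φ.e.symm z ∉ S := fun hmem => hz ⟨φ.e.symm z, hmem, by simp⟩
  have := h x hx _ hz'
  rw [φ.le_iff] at this
  simpa using this

theorem PreIso.isolated_image {P Q : PB A} (φ : PreIso P Q) {S : Set P.Ev}
    (h : Isolated P S) : Isolated Q (φ.e '' S) := by
  rintro y ⟨x, hx, rfl⟩ z hz
  have hz' : φ.e.symm z ∉ S := fun hmem => hz ⟨φ.e.symm z, hmem, by simp⟩
  have := h x hx _ hz'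
  rw [φ.le_iff, φ.le_iff] at this
  constructor
  · intro hle; exact this.1 (by simpa using hle)
  · intro hle; exact this.2 (by simpa using hle)

theorem PreIso.nested_image {P Q : PB A} (φ : PreIso P Q) {S : Set P.Ev}
    (h : Nested P S) : Nested Q (φ.e '' S) := by
  intro B hB
  have hB' : φ.e.symm '' B ∈ P.boxes := by
    rw [φ.box_iff, Equiv.image_symm_image]; exact hB
  rcases h _ hB' with hsub | hdis
  · left
    intro b hb
    have : φ.e.symm b ∈ φ.e.symm '' B := ⟨b, hb, rfl⟩
    have := hsub this
    exact ⟨φ.e.symm b, this, by simp⟩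
  · right
    ext b
    simp only [Set.mem_inter_iff, Set.mem_empty_iff_false, iff_false, not_and]
    intro hb ⟨x, hx, hxb⟩
    have h1 : φ.e.symm b ∈ φ.e.symm '' B := ⟨b, hb, rfl⟩
    have h2 : φ.e.symm b ∈ S := by
      have : φ.e.symm b = x := by rw [← hxb]; simp
      rw [this]; exact hx
    have : φ.e.symm b ∈ φ.e.symm '' B ∩ S := ⟨h1, h2⟩
    rw [hdis] at this
    exact this

/-! ### Decomposition of subsets of sums -/

def leftPart {α β : Type} (S : Set (α ⊕ β)) : Set α := {x | Sum.inl x ∈ S}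
def rightPart {α β : Type} (S : Set (α ⊕ β)) : Set β := {y | Sum.inr y ∈ S}

theorem sum_set_eq {α β : Type} (S : Set (α ⊕ β)) :
    S = Sum.inl '' leftPart S ∪ Sum.inr '' rightPart S := by
  ext z
  rcases z with x | y <;> simp [leftPart, rightPart]

theorem leftPart_union {α β : Type} (S₁ : Set α) (S₂ : Set β) :
    leftPart (Sum.inl '' S₁ ∪ Sum.inr '' S₂) = S₁ := by
  ext x; simp [leftPart]

theorem rightPart_union {α β : Type} (S₁ : Set α) (S₂ : Set β) :
    rightPart (Sum.inl '' S₁ ∪ Sum.inr '' S₂) = S₂ := by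
  ext x; simp [rightPart]

theorem compl_union_sum {α β : Type} (S₁ : Set α) (S₂ : Set β) :
    (Sum.inl '' S₁ ∪ Sum.inr '' S₂)ᶜ = Sum.inl '' S₁ᶜ ∪ Sum.inr '' S₂ᶜ := by
  ext z
  rcases z with x | y <;> simp

/-! ### Prefix and isolated sets in compositions -/

theorem isPrefix_seq_iff {P Q : PB A} (S : Set (seqPB P Q).Ev) :
    IsPrefix (seqPB P Q) S ↔
      (IsPrefix P (leftPart S) ∧ IsPrefix Q (rightPart S) ∧
        ((rightPart S).Nonempty → leftPart S = Set.univ)) := by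
  constructor
  · intro h
    refine ⟨?_, ?_, ?_⟩
    · intro x hx x' hx'
      exact h (Sum.inl x) hx (Sum.inl x') hx'
    · intro y hy y' hy'
      exact h (Sum.inr y) hy (Sum.inr y') hy'
    · rintro ⟨y, hy⟩
      ext x
      simp only [Set.mem_univ, iff_true]
      by_contra hx
      exact h (Sum.inr y) hy (Sum.inl x) hx
  · rintro ⟨h₁, h₂, h₃⟩ z hz w hw
    rcases z with x | y <;> rcases w with x' | y'
    · exact h₁ x hz x' hw
    · trivial
    · exfalso
      apply hw
      have : x' ∈ leftPart S := by rw [h₃ ⟨y, hz⟩]; trivial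
      exact this
    · exact h₂ y hz y' hw

theorem isolated_par_iff {P Q : PB A} (S : Set (parPB P Q).Ev) :
    Isolated (parPB P Q) S ↔
      (Isolated P (leftPart S) ∧ Isolated Q (rightPart S)) := by
  constructor
  · intro h
    constructor
    · intro x hx x' hx'
      exact h (Sum.inl x) hx (Sum.inl x') hx'
    · intro y hy y' hy'
      exact h (Sum.inr y) hy (Sum.inr y') hy'
  · rintro ⟨h₁, h₂⟩ z hz w hw
    rcases z with x | y <;> rcases w with x' | y'
    · exact h₁ x hz x' hw
    · exact ⟨fun h => h, fun h => h⟩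
    · exact ⟨fun h => h, fun h => h⟩
    · exact h₂ y hz y' hw

theorem nested_sum_iff_aux {α β : Type} (X : Set (Set α)) (Y : Set (Set β))
    (S : Set (α ⊕ β)) :
    (∀ B ∈ (Set.image Sum.inl '' X ∪ Set.image Sum.inr '' Y),
        B ⊆ S ∨ B ∩ S = ∅) ↔
      ((∀ B ∈ X, B ⊆ leftPart S ∨ B ∩ leftPart S = ∅) ∧
        (∀ B ∈ Y, B ⊆ rightPart S ∨ B ∩ rightPart S = ∅)) := by
  constructor
  · intro h
    constructor
    · intro B hB
      rcases h (Sum.inl '' B) (Or.inl ⟨B, hB, rfl⟩) with hsub | hdis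
      · left; intro x hx; exact hsub ⟨x, hx, rfl⟩
      · right; ext x
        simp only [Set.mem_inter_iff, Set.mem_empty_iff_false, iff_false, not_and]
        intro hx hx'
        have : (Sum.inl x : α ⊕ β) ∈ Sum.inl '' B ∩ S := ⟨⟨x, hx, rfl⟩, hx'⟩
        rw [hdis] at this; exact this
    · intro B hB
      rcases h (Sum.inr '' B) (Or.inr ⟨B, hB, rfl⟩) with hsub | hdis
      · left; intro x hx; exact hsub ⟨x, hx, rfl⟩
      · right; ext x
        simp only [Set.mem_inter_iff, Set.mem_empty_iff_false, iff_false, not_and]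
        intro hx hx'
        have : (Sum.inr x : α ⊕ β) ∈ Sum.inr '' B ∩ S := ⟨⟨x, hx, rfl⟩, hx'⟩
        rw [hdis] at this; exact this
  · rintro ⟨h₁, h₂⟩ B hB
    rw [mem_sumBoxes] at hB
    rcases hB with ⟨C, hC, rfl⟩ | ⟨C, hC, rfl⟩
    · rcases h₁ C hC with hsub | hdis
      · left; rintro z ⟨x, hx, rfl⟩; exact hsub hx
      · right; ext z
        simp only [Set.mem_inter_iff, Set.mem_empty_iff_false, iff_false, not_and]
        rintro ⟨x, hx, rfl⟩ hz
        have : x ∈ C ∩ leftPart S := ⟨hx, hz⟩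
        rw [hdis] at this; exact this
    · rcases h₂ C hC with hsub | hdis
      · left; rintro z ⟨x, hx, rfl⟩; exact hsub hx
      · right; ext z
        simp only [Set.mem_inter_iff, Set.mem_empty_iff_false, iff_false, not_and]
        rintro ⟨x, hx, rfl⟩ hz
        have : x ∈ C ∩ rightPart S := ⟨hx, hz⟩
        rw [hdis] at this; exact this

theorem nested_seq_iff {P Q : PB A} (S : Set (seqPB P Q).Ev) :
    Nested (seqPB P Q) S ↔ (Nested P (leftPart S) ∧ Nested Q (rightPart S)) :=
  nested_sum_iff_aux P.boxes Q.boxes S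

theorem nested_par_iff {P Q : PB A} (S : Set (parPB P Q).Ev) :
    Nested (parPB P Q) S ↔ (Nested P (leftPart S) ∧ Nested Q (rightPart S)) :=
  nested_sum_iff_aux P.boxes Q.boxes S



variable {A : Type}

def seqList : List (Term A) → Term A
  | [] => .one
  | f :: l => .seq f (seqList l)

def parList : List (Term A) → Term A
  | [] => .one
  | f :: l => .par f (parList l)

def tsize : Term A → ℕ
  | .one => 0
  | .atom _ => 1
  | .seq s t => tsize s + tsize t + 1
  | .par s t => tsize s + tsize t + 1
  | .box s => tsize s + 1

def lsize (l : List (Term A)) : ℕ := (l.map tsize).sum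

@[simp] theorem lsize_nil : lsize ([] : List (Term A)) = 0 := rfl
@[simp] theorem lsize_cons (f : Term A) (l) : lsize (f :: l) = tsize f + lsize l := by
  simp [lsize]
@[simp] theorem lsize_append (l m : List (Term A)) : lsize (l ++ m) = lsize l + lsize m := by
  simp [lsize]

theorem lsize_perm {l m : List (Term A)} (h : l.Perm m) : lsize l = lsize m := by
  simp [lsize]; exact List.Perm.sum_eq (h.map tsize)

theorem tsize_seqList (l : List (Term A)) : tsize (seqList l) = lsize l + l.length := by
  induction l with
  | nil => rfl
  | cons f l ih => simp [seqList, tsize, ih]; omega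

theorem tsize_parList (l : List (Term A)) : tsize (parList l) = lsize l + l.length := by
  induction l with
  | nil => rfl
  | cons f l ih => simp [parList, tsize, ih]; omega

/-- Normal forms: `NF true` are sequential primes, `NF false` parallel primes. -/
inductive NF : Bool → Term A → Prop
  | atom (b : Bool) (a : A) : NF b (.atom a)
  | box (b : Bool) (l : List (Term A)) (hne : l ≠ []) (h : ∀ f ∈ l, NF true f)
      (hnb : ∀ w, l ≠ [.box w]) : NF b (.box (seqList l))
  | par (l : List (Term A)) (hlen : 2 ≤ l.length) (h : ∀ f ∈ l, NF false f) :
      NF true (parList l)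
  | seq (l : List (Term A)) (hlen : 2 ≤ l.length) (h : ∀ f ∈ l, NF true f) :
      NF false (seqList l)

theorem NF.one_le_tsize {b : Bool} {f : Term A} (h : NF b f) : 1 ≤ tsize f := by
  cases h with
  | atom b a => exact le_refl _
  | box b l hne hl hnb => simp [tsize]
  | par l hlen hl =>
      rw [tsize_parList]; omega
  | seq l hlen hl =>
      rw [tsize_seqList]; omega

/-! ### Derivable equations on lists -/

theorem bimEq_seqList_single (f : Term A) : BimEq (seqList [f]) f :=
  BimEq.seq_unit_r f

theorem bimEq_parList_single (f : Term A) : BimEq (parList [f]) f :=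
  BimEq.trans (BimEq.par_comm f .one) (BimEq.par_unit f)

theorem bimEq_seqList_append (l m : List (Term A)) :
    BimEq (seqList (l ++ m)) (.seq (seqList l) (seqList m)) := by
  induction l with
  | nil => exact BimEq.symm (BimEq.seq_unit_l _)
  | cons f l ih =>
      show BimEq (.seq f (seqList (l ++ m))) _
      exact BimEq.trans (BimEq.seq_congr (BimEq.refl f) ih) (BimEq.seq_assoc _ _ _)

theorem bimEq_parList_append (l m : List (Term A)) :
    BimEq (parList (l ++ m)) (.par (parList l) (parList m)) := by
  induction l with
  | nil => exact BimEq.symm (BimEq.par_unit _)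
  | cons f l ih =>
      show BimEq (.par f (parList (l ++ m))) _
      exact BimEq.trans (BimEq.par_congr (BimEq.refl f) ih) (BimEq.par_assoc _ _ _)

theorem bimEq_parList_perm {l m : List (Term A)} (h : l.Perm m) :
    BimEq (parList l) (parList m) := by
  induction h with
  | nil => exact BimEq.refl _
  | cons x _ ih => exact BimEq.par_congr (BimEq.refl x) ih
  | swap x y l =>
      show BimEq (.par y (.par x (parList l))) (.par x (.par y (parList l)))
      refine BimEq.trans (BimEq.par_assoc _ _ _) ?_
      refine BimEq.trans (BimEq.par_congr (BimEq.par_comm y x) (BimEq.refl _)) ?_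
      exact BimEq.symm (BimEq.par_assoc _ _ _)
  | trans _ _ ih₁ ih₂ => exact BimEq.trans ih₁ ih₂

/-! ### Conversions between sequential and parallel factorizations -/

theorem toParFactors {s : Term A} {l : List (Term A)}
    (hl : ∀ f ∈ l, NF true f) (hs : BimEq s (seqList l)) :
    ∃ cs, (∀ f ∈ cs, NF false f) ∧ BimEq s (parList cs) := by
  match l, hl, hs with
  | [], _, hs => exact ⟨[], by simp, hs⟩
  | [f], hl, hs =>
      have hf : NF true f := hl f (by simp)
      have hsf : BimEq s f := BimEq.trans hs (bimEq_seqList_single f)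
      cases hf with
      | atom _ a => exact ⟨[Term.atom a], by simpa using NF.atom false a, BimEq.trans hsf (BimEq.symm (bimEq_parList_single _))⟩
      | box _ l' hne h hnb =>
          exact ⟨[.box (seqList l')], by simpa using NF.box false l' hne h hnb,
            BimEq.trans hsf (BimEq.symm (bimEq_parList_single _))⟩
      | par cs hlen h => exact ⟨cs, h, hsf⟩
  | f :: g :: l, hl, hs =>
      refine ⟨[seqList (f :: g :: l)], ?_, ?_⟩
      · simpa using NF.seq (f :: g :: l) (by simp) hl
      · exact BimEq.trans hs (BimEq.symm (bimEq_parList_single _))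

theorem toSeqFactors {s : Term A} {l : List (Term A)}
    (hl : ∀ f ∈ l, NF false f) (hs : BimEq s (parList l)) :
    ∃ cs, (∀ f ∈ cs, NF true f) ∧ BimEq s (seqList cs) := by
  match l, hl, hs with
  | [], _, hs => exact ⟨[], by simp, hs⟩
  | [f], hl, hs =>
      have hf : NF false f := hl f (by simp)
      have hsf : BimEq s f := BimEq.trans hs (bimEq_parList_single f)
      cases hf with
      | atom _ a => exact ⟨[Term.atom a], by simpa using NF.atom true a, BimEq.trans hsf (BimEq.symm (bimEq_seqList_single _))⟩
      | box _ l' hne h hnb =>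
          exact ⟨[.box (seqList l')], by simpa using NF.box true l' hne h hnb,
            BimEq.trans hsf (BimEq.symm (bimEq_seqList_single _))⟩
      | seq cs hlen h => exact ⟨cs, h, hsf⟩
  | f :: g :: l, hl, hs =>
      refine ⟨[parList (f :: g :: l)], ?_, ?_⟩
      · simpa using NF.par (f :: g :: l) (by simp) hl
      · exact BimEq.trans hs (BimEq.symm (bimEq_seqList_single _))

/-- Every term factors into sequential primes (and into parallel primes). -/
theorem factAux (s : Term A) :
    (∃ l, (∀ f ∈ l, NF true f) ∧ BimEq s (seqList l)) ∧
    (∃ l, (∀ f ∈ l, NF false f) ∧ BimEq s (parList l)) := by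
  induction s with
  | one => exact ⟨⟨[], by simp, BimEq.refl _⟩, ⟨[], by simp, BimEq.refl _⟩⟩
  | atom a =>
      refine ⟨⟨[.atom a], by simpa using NF.atom true a,
        BimEq.symm (bimEq_seqList_single _)⟩,
        ⟨[.atom a], by simpa using NF.atom false a,
        BimEq.symm (bimEq_parList_single _)⟩⟩
  | seq u v ihu ihv =>
      obtain ⟨⟨lu, hlu, hu⟩, -⟩ := ihu
      obtain ⟨⟨lv, hlv, hv⟩, -⟩ := ihv
      have hseq : BimEq (.seq u v) (seqList (lu ++ lv)) := by
        refine BimEq.trans (BimEq.seq_congr hu hv) ?_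
        exact BimEq.symm (bimEq_seqList_append lu lv)
      have h1 : ∀ f ∈ lu ++ lv, NF true f := by
        intro f hf; rcases List.mem_append.1 hf with h | h
        · exact hlu f h
        · exact hlv f h
      refine ⟨⟨lu ++ lv, h1, hseq⟩, ?_⟩
      exact toParFactors h1 hseq
  | par u v ihu ihv =>
      obtain ⟨-, ⟨lu, hlu, hu⟩⟩ := ihu
      obtain ⟨-, ⟨lv, hlv, hv⟩⟩ := ihv
      have hpar : BimEq (.par u v) (parList (lu ++ lv)) := by
        refine BimEq.trans (BimEq.par_congr hu hv) ?_
        exact BimEq.symm (bimEq_parList_append lu lv)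
      have h1 : ∀ f ∈ lu ++ lv, NF false f := by
        intro f hf; rcases List.mem_append.1 hf with h | h
        · exact hlu f h
        · exact hlv f h
      refine ⟨?_, ⟨lu ++ lv, h1, hpar⟩⟩
      exact toSeqFactors h1 hpar
  | box u ihu =>
      obtain ⟨⟨l, hl, hu⟩, -⟩ := ihu
      have key : ∃ m, (∀ f ∈ m, NF true f) ∧ BimEq (.box u) (seqList m) := by
        rcases l with - | ⟨f, l'⟩
        · refine ⟨[], by simp, ?_⟩
          show BimEq _ .one
          exact BimEq.trans (BimEq.box_congr hu) BimEq.box_one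
        rcases l' with - | ⟨g, l''⟩
        · -- singleton factor list
          have hf : NF true f := hl f (by simp)
          have hbu : BimEq (.box u) (.box f) :=
            BimEq.box_congr (BimEq.trans hu (bimEq_seqList_single f))
          match f, hf, hbu with
          | .box w, hf, hbu =>
              refine ⟨[.box w], by simpa using hf, ?_⟩
              exact BimEq.trans hbu (BimEq.trans (BimEq.box_box w)
                (BimEq.symm (bimEq_seqList_single _)))
          | .atom a, hf, hbu =>
              refine ⟨[.box (seqList [.atom a])], ?_, ?_⟩
              · simpa using NF.box true [.atom a] (by simp) (by simpa using hf) (by simp)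
              · exact BimEq.trans hbu (BimEq.trans
                  (BimEq.box_congr (BimEq.symm (bimEq_seqList_single _)))
                  (BimEq.symm (bimEq_seqList_single _)))
          | .one, hf, hbu =>
              refine ⟨[.box (seqList [.one])], ?_, ?_⟩
              · simpa using NF.box true [.one] (by simp) (by simpa using hf) (by simp)
              · exact BimEq.trans hbu (BimEq.trans
                  (BimEq.box_congr (BimEq.symm (bimEq_seqList_single _)))
                  (BimEq.symm (bimEq_seqList_single _)))
          | .seq x y, hf, hbu =>
              refine ⟨[.box (seqList [.seq x y])], ?_, ?_⟩
              · simpa using NF.box true [.seq x y] (by simp) (by simpa using hf) (by simp)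
              · exact BimEq.trans hbu (BimEq.trans
                  (BimEq.box_congr (BimEq.symm (bimEq_seqList_single _)))
                  (BimEq.symm (bimEq_seqList_single _)))
          | .par x y, hf, hbu =>
              refine ⟨[.box (seqList [.par x y])], ?_, ?_⟩
              · simpa using NF.box true [.par x y] (by simp) (by simpa using hf) (by simp)
              · exact BimEq.trans hbu (BimEq.trans
                  (BimEq.box_congr (BimEq.symm (bimEq_seqList_single _)))
                  (BimEq.symm (bimEq_seqList_single _)))
        · -- at least two factors
          refine ⟨[.box (seqList (f :: g :: l''))], ?_, ?_⟩
          · simpa using NF.box true (f :: g :: l'') (by simp) hl (by simp)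
          · exact BimEq.trans (BimEq.box_congr hu) (BimEq.symm (bimEq_seqList_single _))
      obtain ⟨m, hm, hbox⟩ := key
      exact ⟨⟨m, hm, hbox⟩, toParFactors hm hbox⟩



variable {A : Type}

def SeqIndec (P : PB A) : Prop :=
  ∀ S, IsPrefix P S → Nested P S → S = ∅ ∨ S = Set.univ

def ParIndec (P : PB A) : Prop :=
  ∀ S, Isolated P S → Nested P S → S = ∅ ∨ S = Set.univ

def BoxedTop (P : PB A) : Prop := Set.univ ∈ P.boxes

theorem nonempty_seqList_cons (f : Term A) (l : List (Term A))
    (h : Nonempty (semT f).Ev) : Nonempty (semT (seqList (f :: l))).Ev := by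
  obtain ⟨x⟩ := h; exact ⟨Sum.inl x⟩

theorem nonempty_parList_cons (f : Term A) (l : List (Term A))
    (h : Nonempty (semT f).Ev) : Nonempty (semT (parList (f :: l))).Ev := by
  obtain ⟨x⟩ := h; exact ⟨Sum.inl x⟩

theorem NF.nonempty {b : Bool} {f : Term A} (h : NF b f) : Nonempty (semT f).Ev := by
  induction h with
  | atom b a => exact ⟨PUnit.unit⟩
  | box b l hne hl hnb ih =>
      rcases l with - | ⟨f, l'⟩
      · exact absurd rfl hne
      · exact nonempty_seqList_cons f l' (ih f (by simp))
  | par l hlen hl ih =>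
      rcases l with - | ⟨f, l'⟩
      · simp at hlen
      · exact nonempty_parList_cons f l' (ih f (by simp))
  | seq l hlen hl ih =>
      rcases l with - | ⟨f, l'⟩
      · simp at hlen
      · exact nonempty_seqList_cons f l' (ih f (by simp))

theorem nonempty_seqList {l : List (Term A)} (hne : l ≠ [])
    (hl : ∀ f ∈ l, NF true f) : Nonempty (semT (seqList l)).Ev := by
  rcases l with - | ⟨f, l'⟩
  · exact absurd rfl hne
  · exact nonempty_seqList_cons f l' (hl f (by simp)).nonempty

theorem nonempty_parList {l : List (Term A)} (hne : l ≠ [])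
    (hl : ∀ f ∈ l, NF false f) : Nonempty (semT (parList l)).Ev := by
  rcases l with - | ⟨f, l'⟩
  · exact absurd rfl hne
  · exact nonempty_parList_cons f l' (hl f (by simp)).nonempty

/-! ### BoxedTop facts -/

theorem boxedTop_boxPB (P : PB A) (h : Nonempty P.Ev) : BoxedTop (boxPB P) := by
  right
  exact ⟨rfl, ⟨h.some, trivial⟩⟩

theorem univ_ne_inl_image {α β : Type} (hB : Nonempty β) (C : Set α) :
    Sum.inl '' C ≠ (Set.univ : Set (α ⊕ β)) := by
  intro h
  obtain ⟨y⟩ := hB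
  have : (Sum.inr y : α ⊕ β) ∈ Sum.inl '' C := h ▸ trivial
  rcases this with ⟨x, _, hx⟩
  exact absurd hx (by simp)

theorem univ_ne_inr_image {α β : Type} (hA : Nonempty α) (C : Set β) :
    Sum.inr '' C ≠ (Set.univ : Set (α ⊕ β)) := by
  intro h
  obtain ⟨x⟩ := hA
  have : (Sum.inl x : α ⊕ β) ∈ Sum.inr '' C := h ▸ trivial
  rcases this with ⟨y, _, hy⟩
  exact absurd hy (by simp)

theorem not_boxedTop_seqPB {P Q : PB A} (hP : Nonempty P.Ev) (hQ : Nonempty Q.Ev) :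
    ¬ BoxedTop (seqPB P Q) := by
  intro h
  erw [BoxedTop, seqPB_boxes, mem_sumBoxes] at h
  rcases h with ⟨C, _, hC⟩ | ⟨C, _, hC⟩
  · exact univ_ne_inl_image hQ C hC.symm
  · exact univ_ne_inr_image hP C hC.symm

theorem not_boxedTop_parPB {P Q : PB A} (hP : Nonempty P.Ev) (hQ : Nonempty Q.Ev) :
    ¬ BoxedTop (parPB P Q) := by
  intro h
  erw [BoxedTop, parPB_boxes, mem_sumBoxes] at h
  rcases h with ⟨C, _, hC⟩ | ⟨C, _, hC⟩
  · exact univ_ne_inl_image hQ C hC.symm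
  · exact univ_ne_inr_image hP C hC.symm

theorem boxedTop_seq_empty_right {P Q : PB A} (hQ : IsEmpty Q.Ev)
    (h : BoxedTop (seqPB P Q)) : BoxedTop P := by
  erw [BoxedTop, seqPB_boxes, mem_sumBoxes] at h
  rcases h with ⟨C, hC, hCu⟩ | ⟨C, hC, hCu⟩
  · have : C = Set.univ := by
      ext x
      simp only [Set.mem_univ, iff_true]
      have : (Sum.inl x : P.Ev ⊕ Q.Ev) ∈ Sum.inl '' C := by rw [← hCu]; trivial
      rcases this with ⟨x', hx', h⟩
      cases h; exact hx'
    show Set.univ ∈ P.boxes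
    rw [← this]; exact hC
  · exact absurd hC (by rw [boxes_empty_of_isEmpty Q hQ]; exact Set.notMem_empty _)

theorem PreIso.boxedTop {P Q : PB A} (φ : PreIso P Q) (h : BoxedTop P) : BoxedTop Q := by
  have := (φ.box_iff Set.univ).1 h
  rwa [Set.image_univ, Equiv.range_eq_univ] at this

/-! ### Indecomposability -/

theorem trivial_of_nested_univ {P : PB A} (h : BoxedTop P) (S : Set P.Ev)
    (hS : Nested P S) : S = ∅ ∨ S = Set.univ := by
  rcases hS _ h with hsub | hdis
  · right; exact Set.eq_univ_of_univ_subset hsub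
  · left
    rw [Set.univ_inter] at hdis
    exact hdis

theorem trivial_set_of_subsingleton {α : Type} (hsub : ∀ x y : α, x = y) (S : Set α) :
    S = ∅ ∨ S = Set.univ := by
  by_cases h : S.Nonempty
  · right
    obtain ⟨x, hx⟩ := h
    ext y
    simp only [Set.mem_univ, iff_true]
    rw [hsub y x]; exact hx
  · left; exact Set.not_nonempty_iff_eq_empty.1 h

theorem prefix_trivial_parPB {P Q : PB A} (hP : Nonempty P.Ev) (hQ : Nonempty Q.Ev)
    (S : Set (parPB P Q).Ev) (h : IsPrefix (parPB P Q) S) : S = ∅ ∨ S = Set.univ := by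
  by_cases hne : S.Nonempty
  · right
    by_contra hu
    have : ∃ w, w ∉ S := by
      by_contra hw
      push_neg at hw
      exact hu (Set.eq_univ_of_forall hw)
    obtain ⟨w, hw⟩ := this
    obtain ⟨z, hz⟩ := hne
    rcases z with x | y
    · -- all inr are in S
      have hr : ∀ y : Q.Ev, Sum.inr y ∈ S := by
        intro y
        by_contra hy
        exact h (Sum.inl x) hz (Sum.inr y) hy
      rcases w with x' | y'
      · exact h (Sum.inr hQ.some) (hr _) (Sum.inl x') hw
      · exact hw (hr y')
    · have hr : ∀ x : P.Ev, Sum.inl x ∈ S := by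
        intro x
        by_contra hx
        exact h (Sum.inr y) hz (Sum.inl x) hx
      rcases w with x' | y'
      · exact hw (hr x')
      · exact h (Sum.inl hP.some) (hr _) (Sum.inr y') hw
  · left; exact Set.not_nonempty_iff_eq_empty.1 hne

theorem isolated_trivial_seqPB {P Q : PB A} (hP : Nonempty P.Ev) (hQ : Nonempty Q.Ev)
    (S : Set (seqPB P Q).Ev) (h : Isolated (seqPB P Q) S) : S = ∅ ∨ S = Set.univ := by
  by_cases hne : S.Nonempty
  · right
    by_contra hu
    have : ∃ w, w ∉ S := by
      by_contra hw
      push_neg at hw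
      exact hu (Set.eq_univ_of_forall hw)
    obtain ⟨w, hw⟩ := this
    obtain ⟨z, hz⟩ := hne
    rcases z with x | y
    · have hr : ∀ y : Q.Ev, Sum.inr y ∈ S := by
        intro y
        by_contra hy
        exact (h (Sum.inl x) hz (Sum.inr y) hy).1 trivial
      rcases w with x' | y'
      · exact (h (Sum.inr hQ.some) (hr _) (Sum.inl x') hw).2 trivial
      · exact hw (hr y')
    · have hr : ∀ x : P.Ev, Sum.inl x ∈ S := by
        intro x
        by_contra hx
        exact (h (Sum.inr y) hz (Sum.inl x) hx).2 trivial
      rcases w with x' | y'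
      · exact hw (hr x')
      · exact (h (Sum.inl hP.some) (hr _) (Sum.inr y') hw).1 trivial
  · left; exact Set.not_nonempty_iff_eq_empty.1 hne

theorem NF.seqIndec {f : Term A} (h : NF true f) : SeqIndec (semT f) := by
  cases h with
  | atom _ a =>
      intro S _ _
      exact trivial_set_of_subsingleton (fun x y => by cases x; cases y; rfl) S
  | box _ l hne hl hnb =>
      intro S _ hS
      exact trivial_of_nested_univ
        (boxedTop_boxPB _ (nonempty_seqList hne hl)) S hS
  | par l hlen hl =>
      rcases l with - | ⟨c, l'⟩
      · simp at hlen
      rcases l' with - | ⟨d, l''⟩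
      · simp at hlen
      intro S hpre _
      exact prefix_trivial_parPB (hl c (by simp)).nonempty
        (nonempty_parList_cons d l'' (hl d (by simp)).nonempty) S hpre

theorem NF.parIndec {f : Term A} (h : NF false f) : ParIndec (semT f) := by
  cases h with
  | atom _ a =>
      intro S _ _
      exact trivial_set_of_subsingleton (fun x y => by cases x; cases y; rfl) S
  | box _ l hne hl hnb =>
      intro S _ hS
      exact trivial_of_nested_univ
        (boxedTop_boxPB _ (nonempty_seqList hne hl)) S hS
  | seq l hlen hl =>
      rcases l with - | ⟨c, l'⟩
      · simp at hlen
      rcases l' with - | ⟨d, l''⟩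
      · simp at hlen
      intro S hiso _
      exact isolated_trivial_seqPB (hl c (by simp)).nonempty
        (nonempty_seqList_cons d l'' (hl d (by simp)).nonempty) S hiso

theorem NF.not_boxedTop_inner {l : List (Term A)} (hne : l ≠ [])
    (hl : ∀ f ∈ l, NF true f) (hnb : ∀ w, l ≠ [.box w]) :
    ¬ BoxedTop (semT (seqList l)) := by
  rcases l with - | ⟨f, l'⟩
  · exact absurd rfl hne
  rcases l' with - | ⟨g, l''⟩
  · -- single factor, not a box
    intro h
    have hf : NF true f := hl f (by simp)
    have hBf : BoxedTop (semT f) :=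
      boxedTop_seq_empty_right isEmpty_one h
    cases hf with
    | atom _ a =>
        rw [BoxedTop] at hBf
        exact absurd hBf (Set.notMem_empty _)
    | box _ m hm hml hmnb => exact hnb (seqList m) rfl
    | par m hlen hml =>
        rcases m with - | ⟨c, m'⟩
        · simp at hlen
        rcases m' with - | ⟨d, m''⟩
        · simp at hlen
        exact not_boxedTop_parPB (hml c (by simp)).nonempty
          (nonempty_parList_cons d m'' (hml d (by simp)).nonempty) hBf
  · exact not_boxedTop_seqPB (hl f (by simp)).nonempty
      (nonempty_seqList_cons g l'' (hl g (by simp)).nonempty)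

theorem NF.boxedTop_iff {f : Term A} {b : Bool} (h : NF b f) :
    BoxedTop (semT f) ↔ ∃ l, f = .box (seqList l) ∧ l ≠ [] ∧
      (∀ g ∈ l, NF true g) ∧ (∀ w, l ≠ [.box w]) := by
  constructor
  · intro hB
    cases h with
    | atom _ a => exact absurd hB (Set.notMem_empty _)
    | box _ l hne hl hnb => exact ⟨l, rfl, hne, hl, hnb⟩
    | par l hlen hl =>
        rcases l with - | ⟨c, l'⟩
        · simp at hlen
        rcases l' with - | ⟨d, l''⟩
        · simp at hlen
        exact absurd hB (not_boxedTop_parPB (hl c (by simp)).nonempty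
          (nonempty_parList_cons d l'' (hl d (by simp)).nonempty))
    | seq l hlen hl =>
        rcases l with - | ⟨c, l'⟩
        · simp at hlen
        rcases l' with - | ⟨d, l''⟩
        · simp at hlen
        exact absurd hB (not_boxedTop_seqPB (hl c (by simp)).nonempty
          (nonempty_seqList_cons d l'' (hl d (by simp)).nonempty))
  · rintro ⟨l, rfl, hne, hl, hnb⟩
    exact boxedTop_boxPB _ (nonempty_seqList hne hl)



variable {A : Type}

/-- Minimal nonempty prefix-and-nested subset. -/
def MinPN (P : PB A) (S : Set P.Ev) : Prop :=
  S.Nonempty ∧ IsPrefix P S ∧ Nested P S ∧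
    ∀ S' ⊆ S, S'.Nonempty → IsPrefix P S' → Nested P S' → S' = S

/-- Minimal nonempty isolated-and-nested subset. -/
def MinIN (P : PB A) (S : Set P.Ev) : Prop :=
  S.Nonempty ∧ Isolated P S ∧ Nested P S ∧
    ∀ S' ⊆ S, S'.Nonempty → Isolated P S' → Nested P S' → S' = S

theorem PreIso.symm_image_subset {P Q : PB A} (φ : PreIso P Q) {S : Set P.Ev}
    {S' : Set Q.Ev} (h : S' ⊆ φ.e '' S) : φ.e.symm '' S' ⊆ S := by
  rintro x ⟨y, hy, rfl⟩
  rcases h hy with ⟨z, hz, rfl⟩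
  simpa using hz

theorem PreIso.minPN_image {P Q : PB A} (φ : PreIso P Q) {S : Set P.Ev}
    (h : MinPN P S) : MinPN Q (φ.e '' S) := by
  obtain ⟨hne, hpre, hnest, hmin⟩ := h
  refine ⟨hne.image _, φ.isPrefix_image hpre, φ.nested_image hnest, ?_⟩
  intro S' hsub hne' hpre' hnest'
  have h1 : φ.e.symm '' S' ⊆ S := φ.symm_image_subset hsub
  have h2 := hmin _ h1 (hne'.image _) (φ.symm.isPrefix_image hpre')
    (φ.symm.nested_image hnest')
  calc S' = φ.e '' (φ.e.symm '' S') := (Equiv.image_symm_image _ _).symm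
    _ = φ.e '' S := by rw [h2]

theorem PreIso.minIN_image {P Q : PB A} (φ : PreIso P Q) {S : Set P.Ev}
    (h : MinIN P S) : MinIN Q (φ.e '' S) := by
  obtain ⟨hne, hiso, hnest, hmin⟩ := h
  refine ⟨hne.image _, φ.isolated_image hiso, φ.nested_image hnest, ?_⟩
  intro S' hsub hne' hiso' hnest'
  have h1 : φ.e.symm '' S' ⊆ S := φ.symm_image_subset hsub
  have h2 := hmin _ h1 (hne'.image _) (φ.symm.isolated_image hiso')
    (φ.symm.nested_image hnest')
  calc S' = φ.e '' (φ.e.symm '' S') := (Equiv.image_symm_image _ _).symm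
    _ = φ.e '' S := by rw [h2]

/-! ### Head blocks -/

theorem nested_univ (P : PB A) : Nested P Set.univ := fun B _ => Or.inl (Set.subset_univ B)

theorem nested_empty (P : PB A) : Nested P ∅ := fun B _ => Or.inr (Set.inter_empty B)

theorem headBlock_nonempty {α β : Type} (h : Nonempty α) :
    (Sum.inl '' (Set.univ : Set α) ∪ Sum.inr '' (∅ : Set β)).Nonempty :=
  ⟨Sum.inl h.some, Or.inl ⟨h.some, trivial, rfl⟩⟩

theorem mem_headBlock_iff {α β : Type} (z : α ⊕ β) :
    z ∈ (Sum.inl '' (Set.univ : Set α) ∪ Sum.inr '' (∅ : Set β)) ↔ ∃ x, z = Sum.inl x := by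
  rcases z with x | y <;> simp

theorem compl_headBlock {α β : Type} :
    (Sum.inl '' (Set.univ : Set α) ∪ Sum.inr '' (∅ : Set β))ᶜ =
      Sum.inl '' (∅ : Set α) ∪ Sum.inr '' (Set.univ : Set β) := by
  rw [compl_union_sum, Set.compl_univ, Set.compl_empty]

theorem minPN_headBlock {P Q : PB A} (hP : Nonempty P.Ev) (hind : SeqIndec P) :
    MinPN (seqPB P Q) (Sum.inl '' Set.univ ∪ Sum.inr '' ∅) := by
  refine ⟨headBlock_nonempty hP, ?_, ?_, ?_⟩
  · erw [isPrefix_seq_iff, leftPart_union, rightPart_union]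
    exact ⟨fun x _ x' hx' => absurd trivial hx', fun y hy _ _ => absurd hy (Set.notMem_empty _),
      fun h => absurd h (Set.not_nonempty_empty)⟩
  · erw [nested_seq_iff, leftPart_union, rightPart_union]
    exact ⟨nested_univ P, nested_empty Q⟩
  · intro S' hsub hne hpre hnest
    have hR : rightPart S' = ∅ := by
      ext y
      simp only [rightPart, Set.mem_setOf_eq, Set.mem_empty_iff_false, iff_false]
      intro hy
      rcases (mem_headBlock_iff _).1 (hsub hy) with ⟨x, hx⟩
      exact absurd hx (by simp)
    have hL : IsPrefix P (leftPart S') ∧ Nested P (leftPart S') := by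
      constructor
      · exact ((isPrefix_seq_iff S').1 hpre).1
      · exact ((nested_seq_iff S').1 hnest).1
    rcases hind _ hL.1 hL.2 with hempty | huniv
    · exfalso
      obtain ⟨z, hz⟩ := hne
      rcases z with x | y
      · have : x ∈ leftPart S' := hz
        rw [hempty] at this; exact this
      · have : y ∈ rightPart S' := hz
        rw [hR] at this; exact this
    · calc S' = (Sum.inl '' leftPart S' ∪ Sum.inr '' rightPart S' : Set (seqPB P Q).Ev) := sum_set_eq S'
        _ = _ := by rw [huniv, hR]

theorem minIN_headBlock {P Q : PB A} (hP : Nonempty P.Ev) (hind : ParIndec P) :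
    MinIN (parPB P Q) (Sum.inl '' Set.univ ∪ Sum.inr '' ∅) := by
  refine ⟨headBlock_nonempty hP, ?_, ?_, ?_⟩
  · erw [isolated_par_iff, leftPart_union, rightPart_union]
    exact ⟨fun x _ x' hx' => absurd trivial hx', fun y hy _ _ => absurd hy (Set.notMem_empty _)⟩
  · erw [nested_par_iff, leftPart_union, rightPart_union]
    exact ⟨nested_univ P, nested_empty Q⟩
  · intro S' hsub hne hiso hnest
    have hR : rightPart S' = ∅ := by
      ext y
      simp only [rightPart, Set.mem_setOf_eq, Set.mem_empty_iff_false, iff_false]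
      intro hy
      rcases (mem_headBlock_iff _).1 (hsub hy) with ⟨x, hx⟩
      exact absurd hx (by simp)
    have hL : Isolated P (leftPart S') ∧ Nested P (leftPart S') :=
      ⟨((isolated_par_iff S').1 hiso).1, ((nested_par_iff S').1 hnest).1⟩
    rcases hind _ hL.1 hL.2 with hempty | huniv
    · exfalso
      obtain ⟨z, hz⟩ := hne
      rcases z with x | y
      · have : x ∈ leftPart S' := hz
        rw [hempty] at this; exact this
      · have : y ∈ rightPart S' := hz
        rw [hR] at this; exact this
    · calc S' = (Sum.inl '' leftPart S' ∪ Sum.inr '' rightPart S' : Set (parPB P Q).Ev) := sum_set_eq S'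
        _ = _ := by rw [huniv, hR]

theorem minPN_unique {P Q : PB A} (hP : Nonempty P.Ev) (hPind : SeqIndec P)
    {S : Set (seqPB P Q).Ev} (h : MinPN (seqPB P Q) S) :
    S = Sum.inl '' Set.univ ∪ Sum.inr '' ∅ := by
  obtain ⟨hne, hpre, hnest, hmin⟩ := h
  have hL := ((isPrefix_seq_iff S).1 hpre)
  have hN := ((nested_seq_iff S).1 hnest)
  rcases hPind _ hL.1 hN.1 with hempty | huniv
  · exfalso
    have hR : rightPart S = ∅ := by
      by_contra hR
      have : leftPart S = Set.univ :=
        hL.2.2 (Set.nonempty_iff_ne_empty.2 hR)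
      rw [hempty] at this
      exact (Set.univ_eq_empty_iff.1 this.symm).false hP.some
    obtain ⟨z, hz⟩ := hne
    rcases z with x | y
    · have : x ∈ leftPart S := hz
      rw [hempty] at this; exact this
    · have : y ∈ rightPart S := hz
      rw [hR] at this; exact this
  · have hsub : (Sum.inl '' Set.univ ∪ Sum.inr '' ∅ : Set (seqPB P Q).Ev) ⊆ S := by
      rintro z hz
      rcases (mem_headBlock_iff _).1 hz with ⟨x, rfl⟩
      have : x ∈ leftPart S := by rw [huniv]; trivial
      exact this
    have hprops := minPN_headBlock (Q := Q) hP hPind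
    exact (hmin _ hsub hprops.1 hprops.2.1 hprops.2.2.1).symm

/-! ### Block restriction isomorphisms -/

def leftBlockIsoSeq (P Q : PB A) :
    PreIso (restrictPB (seqPB P Q) (Sum.inl '' Set.univ ∪ Sum.inr '' ∅)) P :=
  (((restrictSeqIso P Q Set.univ ∅).symm).trans
    (seqUnitRIso _ _ (isEmpty_restrict_of_subset_empty rfl))).trans (restrictUnivIso P)

def rightBlockIsoSeq (P Q : PB A) :
    PreIso (restrictPB (seqPB P Q) (Sum.inl '' ∅ ∪ Sum.inr '' Set.univ)) Q :=
  (((restrictSeqIso P Q ∅ Set.univ).symm).trans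
    (seqUnitLIso _ _ (isEmpty_restrict_of_subset_empty rfl))).trans (restrictUnivIso Q)

def leftBlockIsoPar (P Q : PB A) :
    PreIso (restrictPB (parPB P Q) (Sum.inl '' Set.univ ∪ Sum.inr '' ∅)) P :=
  ((((restrictParIso P Q Set.univ ∅).symm).trans (parCommIso _ _)).trans
    (parUnitLIso _ _ (isEmpty_restrict_of_subset_empty rfl))).trans (restrictUnivIso P)

def rightBlockIsoPar (P Q : PB A) :
    PreIso (restrictPB (parPB P Q) (Sum.inl '' ∅ ∪ Sum.inr '' Set.univ)) Q :=
  (((restrictParIso P Q ∅ Set.univ).symm).trans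
    (parUnitLIso _ _ (isEmpty_restrict_of_subset_empty rfl))).trans (restrictUnivIso Q)

/-! ### Locating a minimal isolated set in a parallel factorization -/

theorem minPar_locate :
    ∀ (ds : List (Term A)), (∀ f ∈ ds, NF false f) →
    ∀ S : Set (semT (parList ds)).Ev, MinIN (semT (parList ds)) S →
    ∃ d₁ g d₂, ds = d₁ ++ g :: d₂ ∧
      PIso (restrictPB (semT (parList ds)) S) (semT g) ∧
      PIso (restrictPB (semT (parList ds)) Sᶜ) (semT (parList (d₁ ++ d₂))) := by
  intro ds
  induction ds with
  | nil =>
      intro _ S hS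
      exact PEmpty.elim hS.1.some
  | cons g rest ih =>
      intro hds S hS
      obtain ⟨hne, hiso, hnest, hmin⟩ := hS
      have hg : NF false g := hds g (by simp)
      have hrest : ∀ f ∈ rest, NF false f := fun f hf => hds f (by simp [hf])
      have hL : Isolated (semT g) (leftPart S) ∧ Nested (semT g) (leftPart S) :=
        ⟨((isolated_par_iff S).1 hiso).1, ((nested_par_iff S).1 hnest).1⟩
      rcases hg.parIndec _ hL.1 hL.2 with hempty | huniv
      · -- S lives in the tail
        have hS2 : S = Sum.inl '' ∅ ∪ Sum.inr '' rightPart S := by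
          calc S = (Sum.inl '' leftPart S ∪ Sum.inr '' rightPart S : Set (semT (parList (g :: rest))).Ev) := sum_set_eq S
            _ = _ := by rw [hempty]; rfl
        have hS2ne : (rightPart S).Nonempty := by
          obtain ⟨z, hz⟩ := hne
          rcases z with x | y
          · exfalso
            have : x ∈ leftPart S := hz
            rw [hempty] at this; exact this
          · exact ⟨y, hz⟩
        have hS2min : MinIN (semT (parList rest)) (rightPart S) := by
          refine ⟨hS2ne, ((isolated_par_iff S).1 hiso).2, ((nested_par_iff S).1 hnest).2, ?_⟩
          intro S' hsub hne' hiso' hnest'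
          have hT : (Sum.inl '' ∅ ∪ Sum.inr '' S' : Set (semT (parList (g :: rest))).Ev) ⊆ S := by
            rintro z (⟨x, hx, rfl⟩ | ⟨y, hy, rfl⟩)
            · exact absurd hx (Set.notMem_empty _)
            · have : y ∈ rightPart S := hsub hy
              exact this
          have hTne : (Sum.inl '' (∅ : Set (semT g).Ev) ∪ Sum.inr '' S').Nonempty :=
            ⟨Sum.inr hne'.some, Or.inr ⟨hne'.some, hne'.some_mem, rfl⟩⟩
          have hTiso : Isolated (semT (parList (g :: rest))) (Sum.inl '' ∅ ∪ Sum.inr '' S') := by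
            show Isolated (parPB (semT g) (semT (parList rest))) _
            erw [isolated_par_iff, leftPart_union, rightPart_union]
            exact ⟨fun x hx => absurd hx (Set.notMem_empty _), hiso'⟩
          have hTnest : Nested (semT (parList (g :: rest))) (Sum.inl '' ∅ ∪ Sum.inr '' S') := by
            show Nested (parPB (semT g) (semT (parList rest))) _
            erw [nested_par_iff, leftPart_union, rightPart_union]
            exact ⟨nested_empty _, hnest'⟩
          have := hmin _ hT hTne hTiso hTnest
          calc S' = rightPart (Sum.inl '' (∅ : Set (semT g).Ev) ∪ Sum.inr '' S') :=
                (rightPart_union _ _).symm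
            _ = rightPart S := by erw [this]
        obtain ⟨d₁, g', d₂, heq, hiso1, hiso2⟩ := ih hrest _ hS2min
        refine ⟨g :: d₁, g', d₂, by rw [heq]; rfl, ?_, ?_⟩
        · -- restriction to S
          refine PIso.trans ⟨restrictEq _ hS2⟩ (PIso.trans ⟨(restrictParIso _ _ _ _).symm⟩ ?_)
          refine PIso.trans ⟨parUnitLIso _ _ (isEmpty_restrict_of_subset_empty rfl)⟩ hiso1
        · -- restriction to complement
          have hS2c : Sᶜ = Sum.inl '' Set.univ ∪ Sum.inr '' (rightPart S)ᶜ := by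
            conv_lhs => rw [hS2]
            erw [compl_union_sum, Set.compl_empty]
          refine PIso.trans ⟨restrictEq _ hS2c⟩ (PIso.trans ⟨(restrictParIso _ _ _ _).symm⟩ ?_)
          have : PIso (parPB (restrictPB (semT g) Set.univ)
              (restrictPB (semT (parList rest)) (rightPart S)ᶜ))
              (parPB (semT g) (semT (parList (d₁ ++ d₂)))) := by
            obtain ⟨ψ⟩ := hiso2
            exact ⟨parCongrIso (restrictUnivIso _) ψ⟩
          exact this
      · -- S is the head block
        have hS0 : (Sum.inl '' Set.univ ∪ Sum.inr '' ∅ : Set (semT (parList (g :: rest))).Ev) ⊆ S := by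
          rintro z hz
          rcases (mem_headBlock_iff _).1 hz with ⟨x, rfl⟩
          have : x ∈ leftPart S := by rw [huniv]; trivial
          exact this
        have hprops := minIN_headBlock (P := semT g) (Q := semT (parList rest))
          hg.nonempty hg.parIndec
        have hSeq : S = Sum.inl '' Set.univ ∪ Sum.inr '' ∅ :=
          (hmin _ hS0 hprops.1 hprops.2.1 hprops.2.2.1).symm
        refine ⟨[], g, rest, rfl, ?_, ?_⟩
        · exact PIso.trans ⟨restrictEq _ hSeq⟩ ⟨leftBlockIsoPar _ _⟩
        · have hSc : Sᶜ = Sum.inl '' ∅ ∪ Sum.inr '' Set.univ := by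
            erw [hSeq, compl_headBlock]
          exact PIso.trans ⟨restrictEq _ hSc⟩ ⟨rightBlockIsoPar _ _⟩

/-! ### Peeling lemmas -/

theorem seq_peel {f g : Term A} {l m : List (Term A)}
    (hf : NF true f) (hg : NF true g)
    (φ : PreIso (semT (seqList (f :: l))) (semT (seqList (g :: m)))) :
    PIso (semT f) (semT g) ∧ PIso (semT (seqList l)) (semT (seqList m)) := by
  have hminP : MinPN (seqPB (semT f) (semT (seqList l)))
      (Sum.inl '' Set.univ ∪ Sum.inr '' ∅) :=
    minPN_headBlock hf.nonempty hf.seqIndec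
  have hminQ : MinPN (seqPB (semT g) (semT (seqList m)))
      (φ.e '' (Sum.inl '' Set.univ ∪ Sum.inr '' ∅)) :=
    φ.minPN_image hminP
  have hQeq : φ.e '' (Sum.inl '' Set.univ ∪ Sum.inr '' ∅) =
      (Sum.inl '' Set.univ ∪ Sum.inr '' ∅ : Set (seqPB (semT g) (semT (seqList m))).Ev) :=
    minPN_unique hg.nonempty hg.seqIndec hminQ
  constructor
  · refine PIso.trans ⟨(leftBlockIsoSeq (semT f) (semT (seqList l))).symm⟩ ?_
    refine PIso.trans ⟨restrictCongrIso φ _⟩ ?_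
    refine PIso.trans ⟨restrictEq _ hQeq⟩ ?_
    exact ⟨leftBlockIsoSeq (semT g) (semT (seqList m))⟩
  · refine PIso.trans ⟨(rightBlockIsoSeq (semT f) (semT (seqList l))).symm⟩ ?_
    refine PIso.trans ⟨restrictEq _ compl_headBlock.symm⟩ ?_
    refine PIso.trans ⟨restrictCongrIso φ _⟩ ?_
    have himg : φ.e '' (Sum.inl '' Set.univ ∪ Sum.inr '' ∅)ᶜ =
        (Sum.inl '' ∅ ∪ Sum.inr '' Set.univ : Set (seqPB (semT g) (semT (seqList m))).Ev) := by
      erw [φ.image_compl, hQeq, compl_headBlock]; rfl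
    refine PIso.trans ⟨restrictEq _ himg⟩ ?_
    exact ⟨rightBlockIsoSeq (semT g) (semT (seqList m))⟩

theorem par_peel {c : Term A} {cs ds : List (Term A)}
    (hc : NF false c) (hds : ∀ f ∈ ds, NF false f)
    (φ : PreIso (semT (parList (c :: cs))) (semT (parList ds))) :
    ∃ d₁ g d₂, ds = d₁ ++ g :: d₂ ∧ PIso (semT c) (semT g) ∧
      PIso (semT (parList cs)) (semT (parList (d₁ ++ d₂))) := by
  have hminP : MinIN (parPB (semT c) (semT (parList cs)))
      (Sum.inl '' Set.univ ∪ Sum.inr '' ∅) :=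
    minIN_headBlock hc.nonempty hc.parIndec
  have hminQ : MinIN (semT (parList ds))
      (φ.e '' (Sum.inl '' Set.univ ∪ Sum.inr '' ∅)) :=
    φ.minIN_image hminP
  obtain ⟨d₁, g, d₂, heq, hiso1, hiso2⟩ := minPar_locate ds hds _ hminQ
  refine ⟨d₁, g, d₂, heq, ?_, ?_⟩
  · refine PIso.trans ⟨(leftBlockIsoPar (semT c) (semT (parList cs))).symm⟩ ?_
    refine PIso.trans ⟨restrictCongrIso φ _⟩ hiso1
  · refine PIso.trans ⟨(rightBlockIsoPar (semT c) (semT (parList cs))).symm⟩ ?_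
    refine PIso.trans ⟨restrictEq _ compl_headBlock.symm⟩ ?_
    refine PIso.trans ⟨restrictCongrIso φ _⟩ ?_
    refine PIso.trans ⟨restrictEq _ (φ.image_compl _)⟩ hiso2



variable {A : Type}

def boxStrip {P Q : PB A} (φ : PreIso (boxPB P) (boxPB Q))
    (hP : ¬ BoxedTop P) (hQ : ¬ BoxedTop Q) : PreIso P Q where
  e := φ.e
  le_iff := φ.le_iff
  lab_eq := φ.lab_eq
  box_iff := fun B => by
    constructor
    · intro hB
      have := (φ.box_iff B).1 (Or.inl hB)
      rcases this with h | ⟨hu, hne⟩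
      · exact h
      · exfalso
        apply hP
        have hBu : B = Set.univ := by
          have h2 := eqv_image_eq φ.e hu
          erw [h2, Set.image_univ, Equiv.range_eq_univ]; rfl
        show Set.univ ∈ P.boxes
        rw [← hBu]; exact hB
    · intro hB
      have := (φ.box_iff B).2 (Or.inl hB)
      rcases this with h | ⟨hu, hne⟩
      · exact h
      · exfalso
        apply hQ
        show Set.univ ∈ Q.boxes
        have : φ.e '' B = Set.univ := by
          erw [hu, Set.image_univ, Equiv.range_eq_univ]
        erw [← this]; exact hB

theorem atom_subsingleton {a : A} : ∀ x y : (semT (.atom a)).Ev, x = y :=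
  fun x y => by cases x; cases y; rfl

theorem not_piso_atom_two {a : A} {Q : PB A} {u v : Q.Ev} (huv : u ≠ v)
    (φ : PreIso (semT (.atom a)) Q) : False := by
  apply huv
  have h1 : φ.e.symm u = φ.e.symm v := atom_subsingleton _ _
  calc u = φ.e (φ.e.symm u) := by simp
    _ = φ.e (φ.e.symm v) := by rw [h1]
    _ = v := by simp

theorem parList_two_events {c d : Term A} {r : List (Term A)}
    (hc : NF false c) (hd : NF false d) :
    ∃ u v : (semT (parList (c :: d :: r))).Ev, u ≠ v :=
  ⟨Sum.inl hc.nonempty.some, Sum.inr (Sum.inl hd.nonempty.some), Sum.inl_ne_inr⟩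

theorem seqList_two_events {c d : Term A} {r : List (Term A)}
    (hc : NF true c) (hd : NF true d) :
    ∃ u v : (semT (seqList (c :: d :: r))).Ev, u ≠ v :=
  ⟨Sum.inl hc.nonempty.some, Sum.inr (Sum.inl hd.nonempty.some), Sum.inl_ne_inr⟩

theorem piso_empty_absurd {P Q : PB A} (φ : PreIso P Q) (hP : IsEmpty P.Ev)
    (hQ : Nonempty Q.Ev) : False := hP.false (φ.e.symm hQ.some)

theorem main_all : ∀ n : ℕ,
    (∀ f g : Term A, NF true f → NF true g → tsize f + tsize g ≤ n →
      PIso (semT f) (semT g) → BimEq f g) ∧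
    (∀ f g : Term A, NF false f → NF false g → tsize f + tsize g ≤ n →
      PIso (semT f) (semT g) → BimEq f g) ∧
    (∀ l m : List (Term A), (∀ x ∈ l, NF true x) → (∀ x ∈ m, NF true x) →
      lsize l + lsize m ≤ n →
      PIso (semT (seqList l)) (semT (seqList m)) → BimEq (seqList l) (seqList m)) ∧
    (∀ l m : List (Term A), (∀ x ∈ l, NF false x) → (∀ x ∈ m, NF false x) →
      lsize l + lsize m ≤ n →
      PIso (semT (parList l)) (semT (parList m)) → BimEq (parList l) (parList m)) := by
  intro n
  induction n using Nat.strong_induction_on with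
  | _ n ih =>
  -- the boxed-top case, common to both factor statements
  have hboxcase : ∀ (b₁ b₂ : Bool) (f g : Term A), NF b₁ f → NF b₂ g →
      tsize f + tsize g ≤ n → BoxedTop (semT f) →
      PIso (semT f) (semT g) → BimEq f g := by
    intro b₁ b₂ f g hf hg hsize hBf hpiso
    obtain ⟨φ⟩ := hpiso
    have hBg : BoxedTop (semT g) := φ.boxedTop hBf
    obtain ⟨l', hfeq, hl'ne, hl', hl'nb⟩ := (hf.boxedTop_iff).1 hBf
    obtain ⟨m', hgeq, hm'ne, hm', hm'nb⟩ := (hg.boxedTop_iff).1 hBg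
    subst hfeq; subst hgeq
    have hnl : ¬ BoxedTop (semT (seqList l')) := NF.not_boxedTop_inner hl'ne hl' hl'nb
    have hnm : ¬ BoxedTop (semT (seqList m')) := NF.not_boxedTop_inner hm'ne hm' hm'nb
    have ψ : PreIso (semT (seqList l')) (semT (seqList m')) := boxStrip φ hnl hnm
    have hlt : lsize l' + lsize m' < n := by
      have h1 : lsize l' < tsize (Term.box (seqList l')) := by
        rw [tsize]; rw [tsize_seqList]
        have : 1 ≤ l'.length := by
          rcases l' with - | ⟨x, xs⟩
          · exact absurd rfl hl'ne
          · simp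
        omega
      have h2 : lsize m' < tsize (Term.box (seqList m')) := by
        rw [tsize]; rw [tsize_seqList]
        have : 1 ≤ m'.length := by
          rcases m' with - | ⟨x, xs⟩
          · exact absurd rfl hm'ne
          · simp
        omega
      omega
    have := (ih _ hlt).2.2.1 l' m' hl' hm' le_rfl ⟨ψ⟩
    exact BimEq.box_congr this
  have hχt : ∀ f g : Term A, NF true f → NF true g → tsize f + tsize g ≤ n →
      PIso (semT f) (semT g) → BimEq f g := by
    intro f g hf hg hsize hpiso
    by_cases hBf : BoxedTop (semT f)
    · exact hboxcase true true f g hf hg hsize hBf hpiso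
    · have hBg : ¬ BoxedTop (semT g) := by
        intro h
        obtain ⟨φ⟩ := hpiso
        exact hBf (φ.symm.boxedTop h)
      cases hf with
      | atom _ a =>
          cases hg with
          | atom _ b =>
              obtain ⟨φ⟩ := hpiso
              have : (semT (Term.atom b)).lab (φ.e PUnit.unit) = a := φ.lab_eq PUnit.unit
              have hab : b = a := this
              rw [hab]
              exact BimEq.refl _
          | box _ m' hm'ne hm' hm'nb =>
              exact absurd (boxedTop_boxPB _ (nonempty_seqList hm'ne hm')) hBg
          | par m hlen hm =>
              obtain ⟨φ⟩ := hpiso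
              rcases m with - | ⟨c, m'⟩
              · simp at hlen
              rcases m' with - | ⟨d, m''⟩
              · simp at hlen
              obtain ⟨u, v, huv⟩ := parList_two_events (hm c (by simp)) (hm d (by simp))
              exact absurd (not_piso_atom_two huv φ) not_false
      | box _ l' hl'ne hl' hl'nb =>
          exact absurd (boxedTop_boxPB _ (nonempty_seqList hl'ne hl')) hBf
      | par l hlen hl =>
          cases hg with
          | atom _ b =>
              obtain ⟨φ⟩ := hpiso
              rcases l with - | ⟨c, l'⟩
              · simp at hlen
              rcases l' with - | ⟨d, l''⟩
              · simp at hlen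
              obtain ⟨u, v, huv⟩ := parList_two_events (hl c (by simp)) (hl d (by simp))
              exact absurd (not_piso_atom_two huv φ.symm) not_false
          | box _ m' hm'ne hm' hm'nb =>
              exact absurd (boxedTop_boxPB _ (nonempty_seqList hm'ne hm')) hBg
          | par m hlenm hm =>
              have hlt : lsize l + lsize m < n := by
                have h1 : lsize l < tsize (parList l) := by
                  rw [tsize_parList]; omega
                have h2 : lsize m < tsize (parList m) := by
                  rw [tsize_parList]; omega
                omega
              exact (ih _ hlt).2.2.2 l m hl hm le_rfl hpiso
  have hχf : ∀ f g : Term A, NF false f → NF false g → tsize f + tsize g ≤ n →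
      PIso (semT f) (semT g) → BimEq f g := by
    intro f g hf hg hsize hpiso
    by_cases hBf : BoxedTop (semT f)
    · exact hboxcase false false f g hf hg hsize hBf hpiso
    · have hBg : ¬ BoxedTop (semT g) := by
        intro h
        obtain ⟨φ⟩ := hpiso
        exact hBf (φ.symm.boxedTop h)
      cases hf with
      | atom _ a =>
          cases hg with
          | atom _ b =>
              obtain ⟨φ⟩ := hpiso
              have : (semT (Term.atom b)).lab (φ.e PUnit.unit) = a := φ.lab_eq PUnit.unit
              have hab : b = a := this
              rw [hab]
              exact BimEq.refl _
          | box _ m' hm'ne hm' hm'nb =>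
              exact absurd (boxedTop_boxPB _ (nonempty_seqList hm'ne hm')) hBg
          | seq m hlen hm =>
              obtain ⟨φ⟩ := hpiso
              rcases m with - | ⟨c, m'⟩
              · simp at hlen
              rcases m' with - | ⟨d, m''⟩
              · simp at hlen
              obtain ⟨u, v, huv⟩ := seqList_two_events (hm c (by simp)) (hm d (by simp))
              exact absurd (not_piso_atom_two huv φ) not_false
      | box _ l' hl'ne hl' hl'nb =>
          exact absurd (boxedTop_boxPB _ (nonempty_seqList hl'ne hl')) hBf
      | seq l hlen hl =>
          cases hg with
          | atom _ b =>
              obtain ⟨φ⟩ := hpiso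
              rcases l with - | ⟨c, l'⟩
              · simp at hlen
              rcases l' with - | ⟨d, l''⟩
              · simp at hlen
              obtain ⟨u, v, huv⟩ := seqList_two_events (hl c (by simp)) (hl d (by simp))
              exact absurd (not_piso_atom_two huv φ.symm) not_false
          | box _ m' hm'ne hm' hm'nb =>
              exact absurd (boxedTop_boxPB _ (nonempty_seqList hm'ne hm')) hBg
          | seq m hlenm hm =>
              have hlt : lsize l + lsize m < n := by
                have h1 : lsize l < tsize (seqList l) := by
                  rw [tsize_seqList]; omega
                have h2 : lsize m < tsize (seqList m) := by
                  rw [tsize_seqList]; omega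
                omega
              exact (ih _ hlt).2.2.1 l m hl hm le_rfl hpiso
  refine ⟨hχt, hχf, ?_, ?_⟩
  · -- sequential lists
    intro l m hl hm hsize hpiso
    rcases l with - | ⟨f, l'⟩
    · rcases m with - | ⟨g, m'⟩
      · exact BimEq.refl _
      · obtain ⟨φ⟩ := hpiso
        exact absurd (piso_empty_absurd φ isEmpty_one
          (nonempty_seqList (by simp) hm)) not_false
    · rcases m with - | ⟨g, m'⟩
      · obtain ⟨φ⟩ := hpiso
        exact absurd (piso_empty_absurd φ.symm isEmpty_one
          (nonempty_seqList (by simp) hl)) not_false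
      · obtain ⟨φ⟩ := hpiso
        have hf : NF true f := hl f (by simp)
        have hg : NF true g := hm g (by simp)
        obtain ⟨hhead, htail⟩ := seq_peel hf hg φ
        have hl' : ∀ x ∈ l', NF true x := fun x hx => hl x (by simp [hx])
        have hm' : ∀ x ∈ m', NF true x := fun x hx => hm x (by simp [hx])
        have hbhead : BimEq f g := by
          apply hχt f g hf hg ?_ hhead
          simp only [lsize_cons] at hsize
          omega
        have hbtail : BimEq (seqList l') (seqList m') := by
          have hlt : lsize l' + lsize m' < n := by
            have h1 := hf.one_le_tsize
            have h2 := hg.one_le_tsize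
            simp only [lsize_cons] at hsize
            omega
          exact (ih _ hlt).2.2.1 l' m' hl' hm' le_rfl htail
        exact BimEq.seq_congr hbhead hbtail
  · -- parallel lists
    intro l m hl hm hsize hpiso
    rcases l with - | ⟨c, cs⟩
    · rcases m with - | ⟨g, m'⟩
      · exact BimEq.refl _
      · obtain ⟨φ⟩ := hpiso
        exact absurd (piso_empty_absurd φ isEmpty_one
          (nonempty_parList (by simp) hm)) not_false
    · obtain ⟨φ⟩ := hpiso
      have hc : NF false c := hl c (by simp)
      obtain ⟨d₁, g, d₂, heq, hhead, htail⟩ := par_peel hc hm φ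
      have hcs : ∀ x ∈ cs, NF false x := fun x hx => hl x (by simp [hx])
      have hg : NF false g := hm g (by rw [heq]; simp)
      have hd : ∀ x ∈ d₁ ++ d₂, NF false x := by
        intro x hx
        apply hm x
        rw [heq]
        rcases List.mem_append.1 hx with h | h
        · exact List.mem_append.2 (Or.inl h)
        · exact List.mem_append.2 (Or.inr (by simp [h]))
      have hsz : lsize m = lsize d₁ + tsize g + lsize d₂ := by
        rw [heq]; simp; omega
      have hbhead : BimEq c g := by
        apply hχf c g hc hg ?_ hhead
        simp only [lsize_cons] at hsize
        omega
      have hbtail : BimEq (parList cs) (parList (d₁ ++ d₂)) := by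
        have hlt : lsize cs + lsize (d₁ ++ d₂) < n := by
          have h1 := hc.one_le_tsize
          have h2 := hg.one_le_tsize
          simp only [lsize_cons] at hsize
          rw [lsize_append]
          omega
        exact (ih _ hlt).2.2.2 cs (d₁ ++ d₂) hcs hd le_rfl htail
      have step1 : BimEq (parList (c :: cs)) (parList (g :: (d₁ ++ d₂))) :=
        BimEq.par_congr hbhead hbtail
      have step2 : BimEq (parList (g :: (d₁ ++ d₂))) (parList (d₁ ++ g :: d₂)) :=
        bimEq_parList_perm (List.perm_middle.symm)
      rw [heq]
      exact BimEq.trans step1 step2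

/-- Completeness at the level of series-parallel terms. -/
theorem sp_complete {s t : Term A} (h : PIso (semT s) (semT t)) : BimEq s t := by
  obtain ⟨⟨l, hl, hs⟩, -⟩ := factAux s
  obtain ⟨⟨m, hm, ht⟩, -⟩ := factAux t
  have φ : PIso (semT (seqList l)) (semT (seqList m)) :=
    ((bimEq_sound hs).symm.trans h).trans (bimEq_sound ht)
  have hb := (main_all (lsize l + lsize m)).2.2.1 l m hl hm le_rfl φ
  exact BimEq.trans hs (BimEq.trans hb (BimEq.symm ht))



variable {A : Type}

def prodWith {α β γ : Type} (F : α → β → γ) : List α → List β → List γ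
  | [], _ => []
  | x :: l, m => m.map (F x) ++ prodWith F l m

theorem mem_prodWith {α β γ : Type} (F : α → β → γ) (l : List α) (m : List β) (z : γ) :
    z ∈ prodWith F l m ↔ ∃ x ∈ l, ∃ y ∈ m, z = F x y := by
  induction l with
  | nil => simp [prodWith]
  | cons x l ih =>
      simp only [prodWith, List.mem_append, List.mem_map, List.mem_cons, ih]
      constructor
      · rintro (⟨y, hy, rfl⟩ | ⟨x', hx', y, hy, rfl⟩)
        · exact ⟨x, Or.inl rfl, y, hy, rfl⟩
        · exact ⟨x', Or.inr hx', y, hy, rfl⟩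
      · rintro ⟨x', rfl | hx', y, hy, rfl⟩
        · exact Or.inl ⟨y, hy, rfl⟩
        · exact Or.inr ⟨x', hx', y, hy, rfl⟩

def flatten : Term2 A → List (Term A)
  | .zero => []
  | .one => [.one]
  | .atom a => [.atom a]
  | .seq e f => prodWith Term.seq (flatten e) (flatten f)
  | .par e f => prodWith Term.par (flatten e) (flatten f)
  | .plus e f => flatten e ++ flatten f
  | .box e => (flatten e).map Term.box

theorem mem_semT2 {e : Term2 A} {P : PB A} :
    P ∈ semT2 e ↔ ∃ s ∈ flatten e, P = semT s := by
  induction e generalizing P with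
  | zero => simp [semT2, flatten]
  | one => simp [semT2, flatten]; rfl
  | atom a => simp [semT2, flatten]; rfl
  | seq e f ihe ihf =>
      show P ∈ Set.image2 seqPB (semT2 e) (semT2 f) ↔ _
      rw [Set.mem_image2]
      constructor
      · rintro ⟨a, ha, b, hb, rfl⟩
        obtain ⟨s, hs, rfl⟩ := ihe.1 ha
        obtain ⟨t, ht, rfl⟩ := ihf.1 hb
        exact ⟨.seq s t, (mem_prodWith _ _ _ _).2 ⟨s, hs, t, ht, rfl⟩, rfl⟩
      · rintro ⟨u, hu, rfl⟩
        obtain ⟨s, hs, t, ht, rfl⟩ := (mem_prodWith _ _ _ _).1 hu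
        exact ⟨semT s, ihe.2 ⟨s, hs, rfl⟩, semT t, ihf.2 ⟨t, ht, rfl⟩, rfl⟩
  | par e f ihe ihf =>
      show P ∈ Set.image2 parPB (semT2 e) (semT2 f) ↔ _
      rw [Set.mem_image2]
      constructor
      · rintro ⟨a, ha, b, hb, rfl⟩
        obtain ⟨s, hs, rfl⟩ := ihe.1 ha
        obtain ⟨t, ht, rfl⟩ := ihf.1 hb
        exact ⟨.par s t, (mem_prodWith _ _ _ _).2 ⟨s, hs, t, ht, rfl⟩, rfl⟩
      · rintro ⟨u, hu, rfl⟩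
        obtain ⟨s, hs, t, ht, rfl⟩ := (mem_prodWith _ _ _ _).1 hu
        exact ⟨semT s, ihe.2 ⟨s, hs, rfl⟩, semT t, ihf.2 ⟨t, ht, rfl⟩, rfl⟩
  | plus e f ihe ihf =>
      show P ∈ semT2 e ∪ semT2 f ↔ _
      simp only [Set.mem_union, ihe, ihf, flatten, List.mem_append]
      constructor
      · rintro (⟨s, hs, rfl⟩ | ⟨s, hs, rfl⟩)
        · exact ⟨s, Or.inl hs, rfl⟩
        · exact ⟨s, Or.inr hs, rfl⟩
      · rintro ⟨s, hs | hs, rfl⟩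
        · exact Or.inl ⟨s, hs, rfl⟩
        · exact Or.inr ⟨s, hs, rfl⟩
  | box e ihe =>
      show P ∈ boxPB '' semT2 e ↔ _
      rw [Set.mem_image]
      constructor
      · rintro ⟨a, ha, rfl⟩
        obtain ⟨s, hs, rfl⟩ := ihe.1 ha
        exact ⟨.box s, List.mem_map.2 ⟨s, hs, rfl⟩, rfl⟩
      · rintro ⟨u, hu, rfl⟩
        obtain ⟨s, hs, rfl⟩ := List.mem_map.1 hu
        exact ⟨semT s, ihe.2 ⟨s, hs, rfl⟩, rfl⟩

def sumList : List (Term2 A) → Term2 A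
  | [] => .zero
  | x :: l => .plus x (sumList l)

theorem bseq_sumList_append (l m : List (Term2 A)) :
    BSEq (sumList (l ++ m)) (.plus (sumList l) (sumList m)) := by
  induction l with
  | nil => exact BSEq.symm (BSEq.plus_unit _)
  | cons x l ih =>
      show BSEq (.plus x (sumList (l ++ m))) _
      exact BSEq.trans (BSEq.plus_congr (BSEq.refl x) ih) (BSEq.plus_assoc _ _ _)

theorem bimEq_toTerm2 {s t : Term A} (h : BimEq s t) :
    BSEq s.toTerm2 t.toTerm2 := by
  induction h with
  | seq_assoc s t u => exact BSEq.seq_assoc _ _ _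
  | par_assoc s t u => exact BSEq.par_assoc _ _ _
  | par_comm s t => exact BSEq.par_comm _ _
  | seq_unit_l s => exact BSEq.seq_unit_l _
  | seq_unit_r s => exact BSEq.seq_unit_r _
  | par_unit s => exact BSEq.par_unit _
  | box_box s => exact BSEq.box_box _
  | box_one => exact BSEq.box_one
  | refl s => exact BSEq.refl _
  | symm _ ih => exact BSEq.symm ih
  | trans _ _ ih₁ ih₂ => exact BSEq.trans ih₁ ih₂
  | seq_congr _ _ ih₁ ih₂ => exact BSEq.seq_congr ih₁ ih₂
  | par_congr _ _ ih₁ ih₂ => exact BSEq.par_congr ih₁ ih₂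
  | box_congr _ ih => exact BSEq.box_congr ih

theorem bseq_seq_single (x : Term2 A) (m : List (Term2 A)) :
    BSEq (.seq x (sumList m)) (sumList (m.map (Term2.seq x))) := by
  induction m with
  | nil => exact BSEq.seq_zero_r x
  | cons y m ih =>
      show BSEq (.seq x (.plus y (sumList m))) (.plus (.seq x y) _)
      exact BSEq.trans (BSEq.seq_distr_l x y (sumList m))
        (BSEq.plus_congr (BSEq.refl _) ih)

theorem bseq_par_single (x : Term2 A) (m : List (Term2 A)) :
    BSEq (.par x (sumList m)) (sumList (m.map (Term2.par x))) := by
  induction m with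
  | nil => exact BSEq.trans (BSEq.par_comm _ _) (BSEq.par_zero x)
  | cons y m ih =>
      show BSEq (.par x (.plus y (sumList m))) (.plus (.par x y) _)
      exact BSEq.trans (BSEq.par_distr x y (sumList m))
        (BSEq.plus_congr (BSEq.refl _) ih)

theorem bseq_seq_sumList (l m : List (Term2 A)) :
    BSEq (.seq (sumList l) (sumList m)) (sumList (prodWith Term2.seq l m)) := by
  induction l with
  | nil => exact BSEq.seq_zero_l _
  | cons x l ih =>
      show BSEq (.seq (.plus x (sumList l)) (sumList m)) (sumList (m.map (Term2.seq x) ++ _))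
      refine BSEq.trans (BSEq.seq_distr_r x (sumList l) (sumList m)) ?_
      refine BSEq.trans (BSEq.plus_congr (bseq_seq_single x m) ih) ?_
      exact BSEq.symm (bseq_sumList_append _ _)

theorem bseq_par_sumList (l m : List (Term2 A)) :
    BSEq (.par (sumList l) (sumList m)) (sumList (prodWith Term2.par l m)) := by
  induction l with
  | nil => exact BSEq.par_zero _
  | cons x l ih =>
      show BSEq (.par (.plus x (sumList l)) (sumList m)) (sumList (m.map (Term2.par x) ++ _))
      refine BSEq.trans (BSEq.par_comm _ _) ?_
      refine BSEq.trans (BSEq.par_distr (sumList m) x (sumList l)) ?_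
      refine BSEq.trans (BSEq.plus_congr (BSEq.trans (BSEq.par_comm _ _) (bseq_par_single x m))
        (BSEq.trans (BSEq.par_comm _ _) ih)) ?_
      exact BSEq.symm (bseq_sumList_append _ _)

theorem bseq_box_sumList (l : List (Term2 A)) :
    BSEq (.box (sumList l)) (sumList (l.map Term2.box)) := by
  induction l with
  | nil => exact BSEq.box_zero
  | cons x l ih =>
      show BSEq (.box (.plus x (sumList l))) (.plus (.box x) _)
      exact BSEq.trans (BSEq.box_plus x (sumList l))
        (BSEq.plus_congr (BSEq.refl _) ih)

theorem map_toTerm2_prodWith_seq (l m : List (Term A)) :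
    (prodWith Term.seq l m).map Term.toTerm2 =
      prodWith Term2.seq (l.map Term.toTerm2) (m.map Term.toTerm2) := by
  induction l with
  | nil => rfl
  | cons x l ih =>
      show (((m.map (Term.seq x)) ++ prodWith Term.seq l m).map Term.toTerm2) = _
      rw [List.map_append, ih]
      show (m.map (Term.seq x)).map Term.toTerm2 ++ _ = (m.map Term.toTerm2).map (Term2.seq x.toTerm2) ++ _
      rw [List.map_map, List.map_map]
      rfl

theorem map_toTerm2_prodWith_par (l m : List (Term A)) :
    (prodWith Term.par l m).map Term.toTerm2 =
      prodWith Term2.par (l.map Term.toTerm2) (m.map Term.toTerm2) := by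
  induction l with
  | nil => rfl
  | cons x l ih =>
      show (((m.map (Term.par x)) ++ prodWith Term.par l m).map Term.toTerm2) = _
      rw [List.map_append, ih]
      show (m.map (Term.par x)).map Term.toTerm2 ++ _ = (m.map Term.toTerm2).map (Term2.par x.toTerm2) ++ _
      rw [List.map_map, List.map_map]
      rfl

theorem bseq_flatten (e : Term2 A) :
    BSEq e (sumList ((flatten e).map Term.toTerm2)) := by
  induction e with
  | zero => exact BSEq.refl _
  | one =>
      show BSEq Term2.one (.plus .one .zero)
      exact BSEq.symm (BSEq.trans (BSEq.plus_comm _ _) (BSEq.plus_unit _))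
  | atom a =>
      show BSEq (Term2.atom a) (.plus (.atom a) .zero)
      exact BSEq.symm (BSEq.trans (BSEq.plus_comm _ _) (BSEq.plus_unit _))
  | seq e f ihe ihf =>
      refine BSEq.trans (BSEq.seq_congr ihe ihf) ?_
      refine BSEq.trans (bseq_seq_sumList _ _) ?_
      rw [flatten, map_toTerm2_prodWith_seq]
      exact BSEq.refl _
  | par e f ihe ihf =>
      refine BSEq.trans (BSEq.par_congr ihe ihf) ?_
      refine BSEq.trans (bseq_par_sumList _ _) ?_
      rw [flatten, map_toTerm2_prodWith_par]
      exact BSEq.refl _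
  | plus e f ihe ihf =>
      refine BSEq.trans (BSEq.plus_congr ihe ihf) ?_
      rw [flatten, List.map_append]
      exact BSEq.symm (bseq_sumList_append _ _)
  | box e ihe =>
      refine BSEq.trans (BSEq.box_congr ihe) ?_
      refine BSEq.trans (bseq_box_sumList _) ?_
      simp only [flatten, List.map_map]
      exact BSEq.refl _

theorem bseq_absorb {x : Term2 A} {m : List (Term2 A)}
    (h : ∃ y ∈ m, BSEq x y) : BSEq (.plus x (sumList m)) (sumList m) := by
  induction m with
  | nil => simp at h
  | cons y m ih =>
      rcases h with ⟨y', hy', hxy⟩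
      rcases List.mem_cons.1 hy' with rfl | hy'
      · show BSEq (.plus x (.plus y' (sumList m))) (.plus y' (sumList m))
        refine BSEq.trans (BSEq.plus_assoc _ _ _) ?_
        refine BSEq.plus_congr ?_ (BSEq.refl _)
        exact BSEq.trans (BSEq.plus_congr hxy (BSEq.refl _)) (BSEq.plus_idem _)
      · show BSEq (.plus x (.plus y (sumList m))) (.plus y (sumList m))
        refine BSEq.trans (BSEq.plus_assoc _ _ _) ?_
        refine BSEq.trans (BSEq.plus_congr (BSEq.plus_comm _ _) (BSEq.refl _)) ?_
        refine BSEq.trans (BSEq.symm (BSEq.plus_assoc _ _ _)) ?_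
        exact BSEq.plus_congr (BSEq.refl _) (ih ⟨y', hy', hxy⟩)

theorem bseq_sub {l m : List (Term2 A)}
    (h : ∀ x ∈ l, ∃ y ∈ m, BSEq x y) :
    BSEq (.plus (sumList l) (sumList m)) (sumList m) := by
  induction l with
  | nil => exact BSEq.plus_unit _
  | cons x l ih =>
      show BSEq (.plus (.plus x (sumList l)) (sumList m)) _
      refine BSEq.trans (BSEq.symm (BSEq.plus_assoc _ _ _)) ?_
      refine BSEq.trans (BSEq.plus_congr (BSEq.refl _) (ih (fun x hx => h x (by simp [hx])))) ?_
      exact bseq_absorb (h x (by simp))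

theorem bseq_of_mutual {l m : List (Term2 A)}
    (h1 : ∀ x ∈ l, ∃ y ∈ m, BSEq x y) (h2 : ∀ y ∈ m, ∃ x ∈ l, BSEq y x) :
    BSEq (sumList l) (sumList m) := by
  have ha : BSEq (.plus (sumList l) (sumList m)) (sumList m) := bseq_sub h1
  have hb : BSEq (.plus (sumList m) (sumList l)) (sumList l) := bseq_sub h2
  refine BSEq.trans (BSEq.symm hb) ?_
  refine BSEq.trans (BSEq.plus_comm _ _) ha



variable {A : Type}

def DEq (e f : Term2 A) : Prop :=
  (∀ P ∈ semT2 e, ∃ Q ∈ semT2 f, PIso P Q) ∧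
  (∀ Q ∈ semT2 f, ∃ P ∈ semT2 e, PIso Q P)

theorem DEq_of_eq {e f : Term2 A} (h : semT2 e = semT2 f) : DEq e f := by
  constructor
  · intro P hP
    exact ⟨P, h ▸ hP, piso_refl P⟩
  · intro Q hQ
    refine ⟨Q, ?_, piso_refl Q⟩
    rw [h]; exact hQ

theorem isEmpty_onePB : IsEmpty (onePB A).Ev := ⟨fun x => PEmpty.elim x⟩

theorem bseq_sound {e f : Term2 A} (h : BSEq e f) : DEq e f := by
  induction h with
  | seq_assoc s t u =>
      constructor
      · rintro P hP
        obtain ⟨a, ha, bc, hbc, rfl⟩ := hP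
        obtain ⟨b, hb, c, hc, rfl⟩ := hbc
        exact ⟨seqPB (seqPB a b) c,
          Set.mem_image2_of_mem (Set.mem_image2_of_mem ha hb) hc, ⟨seqAssocIso a b c⟩⟩
      · rintro Q hQ
        obtain ⟨ab, hab, c, hc, rfl⟩ := hQ
        obtain ⟨a, ha, b, hb, rfl⟩ := hab
        exact ⟨seqPB a (seqPB b c),
          Set.mem_image2_of_mem ha (Set.mem_image2_of_mem hb hc), ⟨(seqAssocIso a b c).symm⟩⟩
  | par_assoc s t u =>
      constructor
      · rintro P hP
        obtain ⟨a, ha, bc, hbc, rfl⟩ := hP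
        obtain ⟨b, hb, c, hc, rfl⟩ := hbc
        exact ⟨parPB (parPB a b) c,
          Set.mem_image2_of_mem (Set.mem_image2_of_mem ha hb) hc, ⟨parAssocIso a b c⟩⟩
      · rintro Q hQ
        obtain ⟨ab, hab, c, hc, rfl⟩ := hQ
        obtain ⟨a, ha, b, hb, rfl⟩ := hab
        exact ⟨parPB a (parPB b c),
          Set.mem_image2_of_mem ha (Set.mem_image2_of_mem hb hc), ⟨(parAssocIso a b c).symm⟩⟩
  | par_comm s t =>
      constructor
      · rintro P hP
        obtain ⟨a, ha, b, hb, rfl⟩ := hP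
        exact ⟨parPB b a, Set.mem_image2_of_mem hb ha, ⟨parCommIso a b⟩⟩
      · rintro Q hQ
        obtain ⟨b, hb, a, ha, rfl⟩ := hQ
        exact ⟨parPB a b, Set.mem_image2_of_mem ha hb, ⟨parCommIso b a⟩⟩
  | seq_unit_l s =>
      constructor
      · rintro P hP
        obtain ⟨a, ha, b, hb, rfl⟩ := hP
        rcases ha with rfl
        exact ⟨b, hb, ⟨seqUnitLIso _ _ isEmpty_onePB⟩⟩
      · rintro Q hQ
        exact ⟨seqPB (onePB A) Q, Set.mem_image2_of_mem rfl hQ,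
          ⟨(seqUnitLIso _ _ isEmpty_onePB).symm⟩⟩
  | seq_unit_r s =>
      constructor
      · rintro P hP
        obtain ⟨a, ha, b, hb, rfl⟩ := hP
        rcases hb with rfl
        exact ⟨a, ha, ⟨seqUnitRIso _ _ isEmpty_onePB⟩⟩
      · rintro Q hQ
        exact ⟨seqPB Q (onePB A), Set.mem_image2_of_mem hQ rfl,
          ⟨(seqUnitRIso _ _ isEmpty_onePB).symm⟩⟩
  | par_unit s =>
      constructor
      · rintro P hP
        obtain ⟨a, ha, b, hb, rfl⟩ := hP
        rcases ha with rfl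
        exact ⟨b, hb, ⟨parUnitLIso _ _ isEmpty_onePB⟩⟩
      · rintro Q hQ
        exact ⟨parPB (onePB A) Q, Set.mem_image2_of_mem rfl hQ,
          ⟨(parUnitLIso _ _ isEmpty_onePB).symm⟩⟩
  | box_box s =>
      constructor
      · rintro P hP
        obtain ⟨a, ha, rfl⟩ := hP
        obtain ⟨b, hb, rfl⟩ := ha
        exact ⟨boxPB b, Set.mem_image_of_mem _ hb, ⟨boxBoxIso b⟩⟩
      · rintro Q hQ
        obtain ⟨b, hb, rfl⟩ := hQ
        exact ⟨boxPB (boxPB b), Set.mem_image_of_mem _ (Set.mem_image_of_mem _ hb),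
          ⟨(boxBoxIso b).symm⟩⟩
  | box_one =>
      constructor
      · rintro P hP
        obtain ⟨a, ha, rfl⟩ := hP
        rcases ha with rfl
        exact ⟨onePB A, rfl, ⟨boxEmptyIso _ isEmpty_onePB⟩⟩
      · rintro Q hQ
        rcases hQ with rfl
        exact ⟨boxPB (onePB A), Set.mem_image_of_mem _ rfl,
          ⟨(boxEmptyIso _ isEmpty_onePB).symm⟩⟩
  | plus_assoc e f g => exact DEq_of_eq (Set.union_assoc _ _ _).symm
  | plus_comm e f => exact DEq_of_eq (Set.union_comm _ _)
  | plus_idem e => exact DEq_of_eq (Set.union_self _)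
  | plus_unit e => exact DEq_of_eq (Set.empty_union _)
  | seq_zero_l e => exact DEq_of_eq (Set.image2_empty_left)
  | seq_zero_r e => exact DEq_of_eq (Set.image2_empty_right)
  | par_zero e => exact DEq_of_eq (Set.image2_empty_left)
  | seq_distr_l e f g => exact DEq_of_eq (Set.image2_union_right)
  | seq_distr_r e f g => exact DEq_of_eq (Set.image2_union_left)
  | par_distr e f g => exact DEq_of_eq (Set.image2_union_right)
  | box_zero => exact DEq_of_eq (Set.image_empty _)
  | box_plus e f => exact DEq_of_eq (Set.image_union _ _ _)
  | refl e => exact DEq_of_eq rfl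
  | symm _ ih => exact ⟨ih.2, ih.1⟩
  | trans _ _ ih₁ ih₂ =>
      constructor
      · intro P hP
        obtain ⟨Q, hQ, h₁⟩ := ih₁.1 P hP
        obtain ⟨R, hR, h₂⟩ := ih₂.1 Q hQ
        exact ⟨R, hR, h₁.trans h₂⟩
      · intro R hR
        obtain ⟨Q, hQ, h₂⟩ := ih₂.2 R hR
        obtain ⟨P, hP, h₁⟩ := ih₁.2 Q hQ
        exact ⟨P, hP, h₂.trans h₁⟩
  | seq_congr _ _ ih₁ ih₂ =>
      constructor
      · rintro P hP
        obtain ⟨a, ha, b, hb, rfl⟩ := hP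
        obtain ⟨a', ha', hia⟩ := ih₁.1 a ha
        obtain ⟨b', hb', hib⟩ := ih₂.1 b hb
        exact ⟨seqPB a' b', Set.mem_image2_of_mem ha' hb',
          ⟨seqCongrIso hia.some hib.some⟩⟩
      · rintro Q hQ
        obtain ⟨a', ha', b', hb', rfl⟩ := hQ
        obtain ⟨a, ha, hia⟩ := ih₁.2 a' ha'
        obtain ⟨b, hb, hib⟩ := ih₂.2 b' hb'
        exact ⟨seqPB a b, Set.mem_image2_of_mem ha hb,
          ⟨seqCongrIso hia.some hib.some⟩⟩
  | par_congr _ _ ih₁ ih₂ =>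
      constructor
      · rintro P hP
        obtain ⟨a, ha, b, hb, rfl⟩ := hP
        obtain ⟨a', ha', hia⟩ := ih₁.1 a ha
        obtain ⟨b', hb', hib⟩ := ih₂.1 b hb
        exact ⟨parPB a' b', Set.mem_image2_of_mem ha' hb',
          ⟨parCongrIso hia.some hib.some⟩⟩
      · rintro Q hQ
        obtain ⟨a', ha', b', hb', rfl⟩ := hQ
        obtain ⟨a, ha, hia⟩ := ih₁.2 a' ha'
        obtain ⟨b, hb, hib⟩ := ih₂.2 b' hb'
        exact ⟨parPB a b, Set.mem_image2_of_mem ha hb,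
          ⟨parCongrIso hia.some hib.some⟩⟩
  | plus_congr _ _ ih₁ ih₂ =>
      constructor
      · rintro P (hP | hP)
        · obtain ⟨Q, hQ, hi⟩ := ih₁.1 P hP
          exact ⟨Q, Or.inl hQ, hi⟩
        · obtain ⟨Q, hQ, hi⟩ := ih₂.1 P hP
          exact ⟨Q, Or.inr hQ, hi⟩
      · rintro Q (hQ | hQ)
        · obtain ⟨P, hP, hi⟩ := ih₁.2 Q hQ
          exact ⟨P, Or.inl hP, hi⟩
        · obtain ⟨P, hP, hi⟩ := ih₂.2 Q hQ
          exact ⟨P, Or.inr hP, hi⟩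
  | box_congr _ ih =>
      constructor
      · rintro P hP
        obtain ⟨a, ha, rfl⟩ := hP
        obtain ⟨a', ha', hia⟩ := ih.1 a ha
        exact ⟨boxPB a', Set.mem_image_of_mem _ ha', ⟨boxCongrIso hia.some⟩⟩
      · rintro Q hQ
        obtain ⟨a', ha', rfl⟩ := hQ
        obtain ⟨a, ha, hia⟩ := ih.2 a' ha'
        exact ⟨boxPB a, Set.mem_image_of_mem _ ha, ⟨boxCongrIso hia.some⟩⟩

theorem bisemiring_completeness' (A : Type) (e f : Term2 A) :
    ((∀ P ∈ semT2 e, ∃ Q ∈ semT2 f, Iso P Q) ∧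
     (∀ Q ∈ semT2 f, ∃ P ∈ semT2 e, Iso Q P)) ↔ BSEq e f := by
  constructor
  · rintro ⟨h1, h2⟩
    have k1 : ∀ x ∈ (flatten e).map Term.toTerm2,
        ∃ y ∈ (flatten f).map Term.toTerm2, BSEq x y := by
      intro x hx
      obtain ⟨s, hs, rfl⟩ := List.mem_map.1 hx
      obtain ⟨Q, hQ, hiso⟩ := h1 (semT s) (mem_semT2.2 ⟨s, hs, rfl⟩)
      obtain ⟨t, ht, rfl⟩ := mem_semT2.1 hQ
      have hbim : BimEq s t := sp_complete ((iso_iff_piso _ _).1 hiso)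
      exact ⟨t.toTerm2, List.mem_map.2 ⟨t, ht, rfl⟩, bimEq_toTerm2 hbim⟩
    have k2 : ∀ y ∈ (flatten f).map Term.toTerm2,
        ∃ x ∈ (flatten e).map Term.toTerm2, BSEq y x := by
      intro y hy
      obtain ⟨t, ht, rfl⟩ := List.mem_map.1 hy
      obtain ⟨P, hP, hiso⟩ := h2 (semT t) (mem_semT2.2 ⟨t, ht, rfl⟩)
      obtain ⟨s, hs, rfl⟩ := mem_semT2.1 hP
      have hbim : BimEq t s := sp_complete ((iso_iff_piso _ _).1 hiso)
      exact ⟨s.toTerm2, List.mem_map.2 ⟨s, hs, rfl⟩, bimEq_toTerm2 hbim⟩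
    exact BSEq.trans (bseq_flatten e)
      (BSEq.trans (bseq_of_mutual k1 k2) (BSEq.symm (bseq_flatten f)))
  · intro h
    have hd := bseq_sound h
    constructor
    · intro P hP
      obtain ⟨Q, hQ, hiso⟩ := hd.1 P hP
      exact ⟨Q, hQ, (iso_iff_piso _ _).2 hiso⟩
    · intro Q hQ
      obtain ⟨P, hP, hiso⟩ := hd.2 Q hQ
      exact ⟨P, hP, (iso_iff_piso _ _).2 hiso⟩

end

/-- Completeness for sets of pomsets with boxes: `⟦e⟧` and `⟦f⟧` are equal up to
isomorphism iff `e = f` is derivable in the bisemiring-with-boxes theory. -/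
theorem bisemiring_completeness (A : Type) (e f : Term2 A) :
    ((∀ P ∈ semT2 e, ∃ Q ∈ semT2 f, Iso P Q) ∧
     (∀ Q ∈ semT2 f, ∃ P ∈ semT2 e, Iso Q P)) ↔ BSEq e f :=
  bisemiring_completeness' A e f
end

section
/- Frame rule for parallel composition: if P is independent of φ (P does not satisfy ◇[φ] under the isomorphism semantics) and Q satisfies [φ], then for every formula ψ, P satisfies ψ if and only if the parallel composition P ∥ Q satisfies ψ ∗ [φ] (all under the isomorphism semantics). -/
/-- Formulas of pomset logic. -/
inductive Formula (A : Type) : Type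
  | emp : Formula A
  | atom (a : A) : Formula A
  | or (φ ψ : Formula A) : Formula A
  | and (φ ψ : Formula A) : Formula A
  | seqF (φ ψ : Formula A) : Formula A
  | parF (φ ψ : Formula A) : Formula A
  | boxF (φ : Formula A) : Formula A
  | dia (φ : Formula A) : Formula A
  | neg (φ : Formula A) : Formula A

/-- `Q` is a sub-poset of `P` : it is isomorphic to a restriction of `P`. -/
def SubPoset {A : Type} (Q P : PB A) : Prop :=
  ∃ S : Set P.Ev, Iso Q (restrictPB P S)

/-- Satisfaction relation, parametrized by a relation `R` on posets with boxes. -/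
def sat {A : Type} (R : PB A → PB A → Prop) : Formula A → PB A → Prop
  | .emp, P => R P (onePB A)
  | .atom a, P => R P (atomPB a)
  | .or φ ψ, P => sat R φ P ∨ sat R ψ P
  | .and φ ψ, P => sat R φ P ∧ sat R ψ P
  | .seqF φ ψ, P => ∃ P1 P2, R P (seqPB P1 P2) ∧ sat R φ P1 ∧ sat R ψ P2
  | .parF φ ψ, P => ∃ P1 P2, R P (parPB P1 P2) ∧ sat R φ P1 ∧ sat R ψ P2
  | .boxF φ, P => ∃ Q, R P (boxPB Q) ∧ sat R φ Q
  | .dia φ, P => ∃ P' Q, R P P' ∧ SubPoset Q P' ∧ sat R φ Q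
  | .neg φ, P => ¬ sat R φ P

/-- The formula associated with a series–parallel term. -/
def formOf {A : Type} : Term A → Formula A
  | .one => .emp
  | .atom a => .atom a
  | .seq s t => .seqF (formOf s) (formOf t)
  | .par s t => .parF (formOf s) (formOf t)
  | .box s => .boxF (formOf s)

section FrameRuleAux

variable {A : Type}

private def sumGetR {α β : Type} (x : α ⊕ β) (h : ∀ a, x ≠ Sum.inl a) : β :=
  match x, h with
  | .inr b, _ => b
  | .inl a, h => absurd rfl (h a)

private lemma sumGetR_spec {α β : Type} (x : α ⊕ β) (h : ∀ a, x ≠ Sum.inl a) :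
    x = Sum.inr (sumGetR x h) := by
  cases x with
  | inl a => exact absurd rfl (h a)
  | inr b => rfl

private def sumGetL {α β : Type} (x : α ⊕ β) (h : ∀ b, x ≠ Sum.inr b) : α :=
  match x, h with
  | .inl a, _ => a
  | .inr b, h => absurd rfl (h b)

private lemma sumGetL_spec {α β : Type} (x : α ⊕ β) (h : ∀ b, x ≠ Sum.inr b) :
    x = Sum.inl (sumGetL x h) := by
  cases x with
  | inl a => rfl
  | inr b => exact absurd rfl (h b)

private def homId (P : PB A) : Hom P P where
  toFun := id
  bij := Function.bijective_id
  lab_eq := fun _ => rfl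
  mono := fun _ _ h => h
  box_pres := fun B hB => by simpa using hB

private lemma iso_refl (P : PB A) : Iso P P :=
  ⟨homId P, fun _ _ h => h, fun B hB => by simpa [homId] using hB⟩

private lemma iso_symm {P Q : PB A} (h : Iso P Q) : Iso Q P := by
  obtain ⟨f, ford, fbox⟩ := h
  let e := Equiv.ofBijective f.toFun f.bij
  have hfe : ∀ y, f.toFun (e.symm y) = y := fun y => e.apply_symm_apply y
  have himg : ∀ B : Set Q.Ev, f.toFun '' (e.symm '' B) = B := by
    intro B
    ext y
    constructor
    · rintro ⟨x, ⟨b, hb, rfl⟩, rfl⟩; rwa [hfe]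
    · intro hy; exact ⟨e.symm y, ⟨y, hy, rfl⟩, hfe y⟩
  refine ⟨⟨fun y => e.symm y, e.symm.bijective, ?_, ?_, ?_⟩, ?_, ?_⟩
  · intro y; rw [← f.lab_eq (e.symm y), hfe]
  · intro x y hxy
    exact ford _ _ (by rw [hfe, hfe]; exact hxy)
  · intro B hB
    apply fbox
    rw [himg]; exact hB
  · intro x y hxy
    have := f.mono _ _ hxy
    rwa [hfe, hfe] at this
  · intro B hB
    have := f.box_pres _ hB
    rwa [himg] at this

private lemma iso_trans {P Q R : PB A} (h1 : Iso P Q) (h2 : Iso Q R) : Iso P R := by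
  obtain ⟨f, ford, fbox⟩ := h1
  obtain ⟨g, gord, gbox⟩ := h2
  refine ⟨⟨g.toFun ∘ f.toFun, g.bij.comp f.bij, ?_, ?_, ?_⟩, ?_, ?_⟩
  · intro e; simp only [Function.comp_apply, g.lab_eq, f.lab_eq]
  · intro e f' hef; exact g.mono _ _ (f.mono _ _ hef)
  · intro B hB; rw [Set.image_comp]; exact g.box_pres _ (f.box_pres _ hB)
  · intro e f' hef; exact ford _ _ (gord _ _ hef)
  · intro B hB; rw [Set.image_comp] at hB; exact fbox _ (gbox _ hB)

private lemma iso_congr_left {P P' R : PB A} (h : Iso P P') : Iso P R ↔ Iso P' R :=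
  ⟨fun h2 => iso_trans (iso_symm h) h2, fun h2 => iso_trans h h2⟩

private lemma sat_iso {P P' : PB A} (h : Iso P P') (ψ : Formula A) :
    sat Iso ψ P ↔ sat Iso ψ P' := by
  induction ψ with
  | emp => exact iso_congr_left h
  | atom a => exact iso_congr_left h
  | or φ ψ ih1 ih2 => exact or_congr ih1 ih2
  | and φ ψ ih1 ih2 => exact and_congr ih1 ih2
  | seqF φ ψ ih1 ih2 =>
      exact exists_congr fun P1 => exists_congr fun P2 =>
        and_congr_left fun _ => iso_congr_left h
  | parF φ ψ ih1 ih2 =>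
      exact exists_congr fun P1 => exists_congr fun P2 =>
        and_congr_left fun _ => iso_congr_left h
  | boxF φ ih =>
      exact exists_congr fun Qb => and_congr_left fun _ => iso_congr_left h
  | dia φ ih =>
      exact exists_congr fun P'' => exists_congr fun Qs =>
        and_congr_left fun _ => iso_congr_left h
  | neg φ ih => exact not_congr ih

private lemma iso_onePB_of_isEmpty (P : PB A) (h : IsEmpty P.Ev) : Iso P (onePB A) := by
  refine ⟨⟨fun e => (h.false e).elim, ⟨fun {a} => (h.false a).elim, fun y => y.elim⟩,
      fun e => (h.false e).elim, fun e => (h.false e).elim, ?_⟩,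
      fun e => (h.false e).elim, ?_⟩
  · intro B hB
    obtain ⟨x, _⟩ := P.boxes_ne B hB
    exact (h.false x).elim
  · intro B hB
    exact absurd hB (Set.notMem_empty _)

private lemma box_sat_facts {R : PB A} {φ : Formula A} (hφ1 : ¬ sat Iso φ (onePB A))
    (hR : sat Iso (Formula.boxF φ) R) :
    Nonempty R.Ev ∧ (Set.univ : Set R.Ev) ∈ R.boxes := by
  obtain ⟨Q', hiso, hQ'⟩ := hR
  obtain ⟨f, ford, fbox⟩ := hiso
  have hQ'ne : Nonempty Q'.Ev := by
    by_contra hne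
    rw [not_nonempty_iff] at hne
    exact hφ1 ((sat_iso (iso_onePB_of_isEmpty Q' hne) φ).mp hQ')
  have hRne : Nonempty R.Ev := by
    obtain ⟨y⟩ := hQ'ne
    obtain ⟨x, _⟩ := f.bij.surjective y
    exact ⟨x⟩
  refine ⟨hRne, ?_⟩
  apply fbox
  have : f.toFun '' (Set.univ : Set R.Ev) = Set.univ := by
    rw [Set.image_univ]; exact f.bij.surjective.range_eq
  rw [this]
  haveI := hQ'ne
  exact Or.inr ⟨rfl, Set.univ_nonempty⟩

end FrameRuleAux
/-- Frame rule for parallel composition: if `P` is independent of `φ` and `Q`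
satisfies `[φ]`, then `P ⊨ ψ` iff `P ∥ Q ⊨ ψ ∗ [φ]` (isomorphism semantics). -/
theorem frame_rule_par (A : Type) (P Q : PB A) (φ : Formula A)
    (hind : ¬ sat Iso (Formula.dia (Formula.boxF φ)) P)
    (hQ : sat Iso (Formula.boxF φ) Q) :
    ∀ ψ : Formula A, sat Iso ψ P ↔ sat Iso (Formula.parF ψ (Formula.boxF φ)) (parPB P Q) := by
  have hφ1 : ¬ sat Iso φ (onePB A) := by
    intro h1
    apply hind
    refine ⟨P, onePB A, iso_refl P, ⟨∅, iso_symm (iso_onePB_of_isEmpty _ ?_)⟩,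
      ⟨onePB A, iso_symm (iso_onePB_of_isEmpty _ ?_), h1⟩⟩
    · exact ⟨fun x => absurd x.2 (Set.notMem_empty _)⟩
    · exact inferInstanceAs (IsEmpty PEmpty)
  obtain ⟨hQne, hQuniv⟩ := box_sat_facts hφ1 hQ
  intro ψ
  constructor
  · intro hψ
    exact ⟨P, Q, iso_refl _, hψ, hQ⟩
  · rintro ⟨P1, P2, ⟨f, ford, fbox⟩, hψ1, hbox2⟩
    obtain ⟨hP2ne, hP2univ⟩ := box_sat_facts hφ1 hbox2
    set D : Set (P.Ev ⊕ Q.Ev) := f.toFun ⁻¹' (Sum.inr '' (Set.univ : Set P2.Ev)) with hDdef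
    have hfD : f.toFun '' D = Sum.inr '' (Set.univ : Set P2.Ev) :=
      Set.image_preimage_eq _ f.bij.surjective
    have hDbox : D ∈ (parPB P Q).boxes := by
      apply fbox
      rw [hfD]
      exact Or.inr ⟨Set.univ, hP2univ, rfl⟩
    rcases hDbox with ⟨B, hB, hBD⟩ | ⟨B, hB, hBD⟩
    · -- preimage of the P2-block sits inside P : contradiction with independence
      exfalso
      have hxmem : ∀ x : P.Ev, x ∈ B → ∀ a : P1.Ev, f.toFun (Sum.inl x) ≠ Sum.inl a := by
        intro x hx a hEq
        have hmem : (Sum.inl x : P.Ev ⊕ Q.Ev) ∈ D := hBD ▸ ⟨x, hx, rfl⟩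
        obtain ⟨y, _, hy⟩ := Set.mem_preimage.mp hmem
        rw [hEq] at hy
        exact Sum.inr_ne_inl hy
      let g : (restrictPB P B).Ev → P2.Ev :=
        fun x => sumGetR (f.toFun (Sum.inl x.1)) (hxmem x.1 x.2)
      have hg : ∀ x : (restrictPB P B).Ev, f.toFun (Sum.inl x.1) = Sum.inr (g x) :=
        fun x => sumGetR_spec _ _
      have himg : ∀ C : Set (restrictPB P B).Ev,
          f.toFun '' (Sum.inl '' (Subtype.val '' C)) = Sum.inr '' (g '' C) := by
        intro C
        simp only [Set.image_image]
        exact (Set.image_image _ _ _).trans ((Set.image_image _ _ _).trans (Set.image_congr fun x _ => hg x))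
      have hIso : Iso (restrictPB P B) P2 := by
        refine ⟨⟨g, ⟨?_, ?_⟩, ?_, ?_, ?_⟩, ?_, ?_⟩
        · intro x y hxy
          apply Subtype.ext
          have h1 : f.toFun (Sum.inl x.1) = f.toFun (Sum.inl y.1) := by
            rw [hg x, hg y, hxy]
          exact Sum.inl_injective (f.bij.injective h1)
        · intro y
          have h1 : (Sum.inr y : P1.Ev ⊕ P2.Ev) ∈ f.toFun '' D := by
            rw [hfD]; exact ⟨y, trivial, rfl⟩
          rw [← hBD] at h1
          obtain ⟨w, ⟨x, hx, rfl⟩, hw⟩ := h1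
          refine ⟨⟨x, hx⟩, ?_⟩
          have h2 := hg ⟨x, hx⟩
          rw [hw] at h2
          exact (Sum.inr_injective h2).symm
        · intro x
          have h1 := f.lab_eq (Sum.inl x.1)
          rw [hg x] at h1
          exact h1
        · intro x y hxy
          have h1 := f.mono (Sum.inl x.1) (Sum.inl y.1) hxy
          rw [hg x, hg y] at h1
          exact h1
        · intro C hC
          have h2 := f.box_pres _ (Or.inl ⟨_, hC, rfl⟩ :
            Sum.inl '' (Subtype.val '' C) ∈ (parPB P Q).boxes)
          erw [himg] at h2
          rcases h2 with ⟨C1, _, hC1eq⟩ | ⟨C2, hC2, hC2eq⟩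
          · exfalso
            obtain ⟨v, u, hu, _⟩ := P.boxes_ne _ hC
            have : Sum.inr (g u) ∈ Sum.inl '' C1 := hC1eq ▸ ⟨g u, ⟨u, hu, rfl⟩, rfl⟩
            obtain ⟨a, _, ha⟩ := this
            exact Sum.inl_ne_inr ha
          · exact (Set.image_injective.mpr Sum.inr_injective hC2eq) ▸ hC2
        · intro x y hxy
          have h1 : (parPB P1 P2).le (f.toFun (Sum.inl x.1)) (f.toFun (Sum.inl y.1)) := by
            rw [hg x, hg y]; exact hxy
          exact ford _ _ h1
        · intro C hgC
          have h1 : Sum.inr '' (g '' C) ∈ (parPB P1 P2).boxes := Or.inr ⟨_, hgC, rfl⟩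
          rw [← himg] at h1
          have h4 := fbox _ h1
          rcases h4 with ⟨B', hB', hB'eq⟩ | ⟨B', hB', hB'eq⟩
          · have h5 : B' = Subtype.val '' C := Set.image_injective.mpr Sum.inl_injective hB'eq
            show Subtype.val '' C ∈ P.boxes
            exact h5 ▸ hB'
          · exfalso
            obtain ⟨b0, hb0⟩ := Q.boxes_ne _ hB'
            have : Sum.inr b0 ∈ Sum.inl '' (Subtype.val '' C) := hB'eq ▸ ⟨b0, hb0, rfl⟩
            obtain ⟨a, _, ha⟩ := this
            exact Sum.inl_ne_inr ha
      exact hind ⟨P, P2, iso_refl P, ⟨B, iso_symm hIso⟩, hbox2⟩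
    · -- preimage of the P2-block sits inside Q : P ≅ P1
      have hEbox : f.toFun '' (Sum.inr '' (Set.univ : Set Q.Ev)) ∈ (parPB P1 P2).boxes :=
        f.box_pres _ (Or.inr ⟨_, hQuniv, rfl⟩)
      rcases hEbox with ⟨C1, _, hC1eq⟩ | ⟨C2, _, hC2eq⟩
      · exfalso
        obtain ⟨y0⟩ := hP2ne
        have h1 : (Sum.inr y0 : P1.Ev ⊕ P2.Ev) ∈ f.toFun '' D := by
          rw [hfD]; exact ⟨y0, trivial, rfl⟩
        rw [← hBD] at h1
        obtain ⟨w, ⟨b, _, rfl⟩, hw⟩ := h1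
        have h2 : f.toFun (Sum.inr b) ∈ Sum.inl '' C1 :=
          hC1eq ▸ ⟨Sum.inr b, ⟨b, trivial, rfl⟩, rfl⟩
        obtain ⟨a, _, ha⟩ := h2
        rw [hw] at ha
        exact Sum.inl_ne_inr ha
      · have hQside : ∀ q : Q.Ev, ∀ a : P1.Ev, f.toFun (Sum.inr q) ≠ Sum.inl a := by
          intro q a hEq
          have h1 : f.toFun (Sum.inr q) ∈ Sum.inr '' C2 :=
            hC2eq ▸ ⟨Sum.inr q, ⟨q, trivial, rfl⟩, rfl⟩
          obtain ⟨y, _, hy⟩ := h1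
          rw [hEq] at hy
          exact Sum.inr_ne_inl hy
        have hPside : ∀ x : P.Ev, ∀ y : P2.Ev, f.toFun (Sum.inl x) ≠ Sum.inr y := by
          intro x y hEq
          have h1 : (Sum.inl x : P.Ev ⊕ Q.Ev) ∈ D :=
            Set.mem_preimage.mpr (by rw [hEq]; exact ⟨y, trivial, rfl⟩)
          rw [← hBD] at h1
          obtain ⟨b, _, hb⟩ := h1
          exact Sum.inr_ne_inl hb
        let g : P.Ev → P1.Ev := fun x => sumGetL (f.toFun (Sum.inl x)) (hPside x)
        have hg : ∀ x, f.toFun (Sum.inl x) = Sum.inl (g x) := fun x => sumGetL_spec _ _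
        have himg : ∀ C : Set P.Ev, f.toFun '' (Sum.inl '' C) = Sum.inl '' (g '' C) := by
          intro C
          simp only [Set.image_image]
          exact (Set.image_image _ _ _).trans (Set.image_congr fun x _ => hg x)
        have hIso : Iso P P1 := by
          refine ⟨⟨g, ⟨?_, ?_⟩, ?_, ?_, ?_⟩, ?_, ?_⟩
          · intro x y hxy
            have h1 : f.toFun (Sum.inl x) = f.toFun (Sum.inl y) := by
              rw [hg x, hg y, hxy]
            exact Sum.inl_injective (f.bij.injective h1)
          · intro z
            obtain ⟨w, hw⟩ := f.bij.surjective (Sum.inl z)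
            cases w with
            | inl x => exact ⟨x, Sum.inl_injective ((hg x).symm.trans hw)⟩
            | inr q => exact absurd hw (hQside q z)
          · intro x
            have h1 := f.lab_eq (Sum.inl x)
            rw [hg x] at h1
            exact h1
          · intro x y hxy
            have h1 := f.mono (Sum.inl x) (Sum.inl y) hxy
            rw [hg x, hg y] at h1
            exact h1
          · intro C hC
            have h2 := f.box_pres _ (Or.inl ⟨_, hC, rfl⟩ :
              Sum.inl '' C ∈ (parPB P Q).boxes)
            erw [himg] at h2
            rcases h2 with ⟨C1', hC1', hC1'eq⟩ | ⟨C2', _, hC2'eq⟩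
            · exact (Set.image_injective.mpr Sum.inl_injective hC1'eq) ▸ hC1'
            · exfalso
              obtain ⟨u, hu⟩ := P.boxes_ne _ hC
              have : Sum.inl (g u) ∈ Sum.inr '' C2' := hC2'eq ▸ ⟨g u, ⟨u, hu, rfl⟩, rfl⟩
              obtain ⟨a, _, ha⟩ := this
              exact Sum.inr_ne_inl ha
          · intro x y hxy
            have h1 : (parPB P1 P2).le (f.toFun (Sum.inl x)) (f.toFun (Sum.inl y)) := by
              rw [hg x, hg y]; exact hxy
            exact ford _ _ h1
          · intro C hgC
            have h1 : Sum.inl '' (g '' C) ∈ (parPB P1 P2).boxes := Or.inl ⟨_, hgC, rfl⟩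
            rw [← himg] at h1
            have h4 := fbox _ h1
            rcases h4 with ⟨B', hB', hB'eq⟩ | ⟨B', hB', hB'eq⟩
            · exact (Set.image_injective.mpr Sum.inl_injective hB'eq) ▸ hB'
            · exfalso
              obtain ⟨b0, hb0⟩ := Q.boxes_ne _ hB'
              have : Sum.inr b0 ∈ Sum.inl '' C := hB'eq ▸ ⟨b0, hb0, rfl⟩
              obtain ⟨a, _, ha⟩ := this
              exact Sum.inl_ne_inr ha
        exact (sat_iso hIso ψ).mpr hψ1
end
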